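/- arXiv:1806.08631 — 4 statements merged into one kernel-verified Lean document; each statement's English description precedes it below -/
import Mathlib

section
/- Let X and Y be locally isomorphic Λ-lattices such that there exists an isomorphism of 𝓜-lattices f : 𝓜X → 𝓜Y. Then f restricts to an isomorphism f|_X : X → Y of Λ-lattices if and only if f(X) ⊆ Y. -/
open Submodule Function

/-- A submodule is stable under (left multiplication by) a set `S` of operators. -/
def SetStable {A V R₀ : Type*} [Semiring R₀] [AddCommMonoid V] [Module R₀ V] [SMul A V]
    (S : Set A) (X : Submodule R₀ V) : Prop :=
  ∀ a ∈ S, ∀ x ∈ X, a • x ∈ X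

/-- A linear map `f : X → Y` intertwines the action of every element of `S`. -/
def IsEquivMap {A V W R₀ : Type*} [Semiring R₀] [AddCommMonoid V] [AddCommMonoid W]
    [Module R₀ V] [Module R₀ W] [SMul A V] [SMul A W]
    (S : Set A) (X : Submodule R₀ V) (Y : Submodule R₀ W) (f : X →ₗ[R₀] Y) : Prop :=
  ∀ a ∈ S, ∀ (v : V) (hv : v ∈ X) (hav : a • v ∈ X),
    ((f ⟨a • v, hav⟩ : Y) : W) = a • ((f ⟨v, hv⟩ : Y) : W)

/-- There exists an isomorphism of lattices, i.e. a bijective `R₀`-linear map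
intertwining the action of every element of `S`. -/
def ExistsLatIso {A V W R₀ : Type*} [Semiring R₀] [AddCommMonoid V] [AddCommMonoid W]
    [Module R₀ V] [Module R₀ W] [SMul A V] [SMul A W]
    (S : Set A) (X : Submodule R₀ V) (Y : Submodule R₀ W) : Prop :=
  ∃ f : X →ₗ[R₀] Y, Function.Bijective f ∧ IsEquivMap S X Y f

/-- `Λ` is an `𝒪`-order in the `K`-algebra `A`: it is a subring that is finitely
generated as an `𝒪`-module and spans `A` over `K`. -/
def IsOrder (𝒪 K A : Type*) [CommRing 𝒪] [Field K] [Ring A] [Algebra 𝒪 K] [Algebra K A]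
    [Algebra 𝒪 A] (Λ : Subalgebra 𝒪 A) : Prop :=
  (Subalgebra.toSubmodule Λ).FG ∧ Submodule.span K (Λ : Set A) = ⊤

/-- The localization `𝒪_𝔭` of `𝒪` at a prime `𝔭`, realized as a subalgebra of the
fraction field `K`. -/
noncomputable def localizationAt (𝒪 K : Type*) [CommRing 𝒪] [IsDomain 𝒪] [Field K]
    [Algebra 𝒪 K] [IsFractionRing 𝒪 K] (𝔭 : Ideal 𝒪) (h𝔭 : 𝔭.IsPrime) : Subalgebra 𝒪 K :=
  letI := h𝔭
  Localization.subalgebra K 𝔭.primeCompl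
    (fun s hs => mem_nonZeroDivisors_of_ne_zero (fun h => hs (by simp [h])))

/-- The localization `X_𝔭 = 𝒪_𝔭 X` of a lattice `X`, as an `𝒪_𝔭`-submodule. -/
noncomputable def locLattice (𝒪 K : Type*) [CommRing 𝒪] [IsDomain 𝒪] [Field K]
    [Algebra 𝒪 K] [IsFractionRing 𝒪 K] {V : Type*} [AddCommGroup V] [Module K V] [Module 𝒪 V]
    (𝔭 : Ideal 𝒪) (h𝔭 : 𝔭.IsPrime) (X : Submodule 𝒪 V) :
    Submodule (localizationAt 𝒪 K 𝔭 h𝔭) V :=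
  Submodule.span (localizationAt 𝒪 K 𝔭 h𝔭) (X : Set V)

/-- Two `Λ`-lattices are locally isomorphic (lie in the same genus) if their
localizations at every maximal ideal `𝔭` of `𝒪` are isomorphic `Λ_𝔭`-lattices. -/
noncomputable def LocallyIsomorphic (𝒪 K A : Type*) [CommRing 𝒪] [IsDomain 𝒪] [Field K]
    [Algebra 𝒪 K] [IsFractionRing 𝒪 K] [Ring A] [Algebra 𝒪 A]
    {V W : Type*} [AddCommGroup V] [Module K V] [Module 𝒪 V] [Module A V]
    [AddCommGroup W] [Module K W] [Module 𝒪 W] [Module A W]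
    (Λ : Subalgebra 𝒪 A) (X : Submodule 𝒪 V) (Y : Submodule 𝒪 W) : Prop :=
  ∀ (𝔭 : Ideal 𝒪) (h𝔭 : 𝔭.IsMaximal),
    ExistsLatIso (Λ : Set A) (locLattice 𝒪 K 𝔭 h𝔭.isPrime X) (locLattice 𝒪 K 𝔭 h𝔭.isPrime Y)

/-- `𝓜` is a maximal `𝒪`-order in `A`. -/
def IsMaximalOrder (𝒪 K A : Type*) [CommRing 𝒪] [Field K] [Ring A] [Algebra 𝒪 K]
    [Algebra K A] [Algebra 𝒪 A] (𝓜 : Subalgebra 𝒪 A) : Prop :=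
  IsOrder 𝒪 K A 𝓜 ∧ ∀ Λ'' : Subalgebra 𝒪 A, IsOrder 𝒪 K A Λ'' → 𝓜 ≤ Λ'' → 𝓜 = Λ''

section AuxLemmas

lemma smul_comm_aux {K A V : Type*} [Field K] [Ring A] [Algebra K A]
    [AddCommGroup V] [Module K V] [Module A V] [IsScalarTower K A V]
    (k : K) (a : A) (v : V) : a • (k • v) = k • (a • v) := by
  have h1 : k • v = (k • (1 : A)) • v := by rw [smul_assoc, one_smul]
  rw [h1, ← mul_smul, Algebra.mul_smul_comm, mul_one, smul_assoc]

lemma osmul_comm {𝒪 K A V : Type*} [CommRing 𝒪] [Field K] [Ring A] [Algebra 𝒪 K] [Algebra K A]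
    [AddCommGroup V] [Module K V] [Module 𝒪 V] [IsScalarTower 𝒪 K V]
    [Module A V] [IsScalarTower K A V] (r : 𝒪) (a : A) (v : V) :
    a • (r • v) = r • (a • v) := by
  rw [← algebraMap_smul K r v, smul_comm_aux, algebraMap_smul]

lemma rsmul_comm {𝒪 K : Type*} [CommRing 𝒪] [Field K] [Algebra 𝒪 K] (R : Subalgebra 𝒪 K)
    {A V : Type*} [Ring A] [Algebra K A] [AddCommGroup V] [Module K V] [Module A V]
    [IsScalarTower K A V] (r : R) (a : A) (v : V) :
    a • (r • v) = r • (a • v) :=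
  smul_comm_aux (r : K) a v

lemma smul_mem_span {𝒪 K : Type*} [CommRing 𝒪] [Field K] [Algebra 𝒪 K] (R : Subalgebra 𝒪 K)
    {A V : Type*} [Ring A] [Algebra K A] [AddCommGroup V] [Module K V] [Module A V]
    [IsScalarTower K A V] (a : A) (s t : Set V)
    (h : ∀ v ∈ s, a • v ∈ Submodule.span R t) :
    ∀ v ∈ Submodule.span R s, a • v ∈ Submodule.span R t := by
  intro v hv
  induction hv using Submodule.span_induction with
  | mem x hx => exact h x hx
  | zero => rw [smul_zero]; exact Submodule.zero_mem _
  | add x y hx hy ihx ihy => rw [smul_add]; exact Submodule.add_mem _ ihx ihy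
  | smul r x hx ih => rw [rsmul_comm R r a x]; exact Submodule.smul_mem _ r ih

lemma equivariant_extend {K A V W : Type*} [Field K] [Ring A] [Algebra K A]
    [AddCommGroup V] [Module K V] [Module A V] [IsScalarTower K A V]
    [AddCommGroup W] [Module K W] [Module A W] [IsScalarTower K A W]
    (F : V →ₗ[K] W) (S : Set A) (T : Set V)
    (h : ∀ a ∈ S, ∀ v ∈ T, F (a • v) = a • F v) :
    ∀ a ∈ Submodule.span K S, ∀ v ∈ Submodule.span K T, F (a • v) = a • F v := by
  have Q1 : ∀ a ∈ S, ∀ v ∈ Submodule.span K T, F (a • v) = a • F v := by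
    intro a ha v hv
    induction hv using Submodule.span_induction with
    | mem x hx => exact h a ha x hx
    | zero => rw [smul_zero, map_zero, smul_zero]
    | add x y hx hy ihx ihy => rw [smul_add, map_add, map_add, ihx, ihy, smul_add]
    | smul k x hx ih => rw [smul_comm_aux, F.map_smul, F.map_smul, ih, smul_comm_aux]
  intro a ha v hv
  induction ha using Submodule.span_induction with
  | mem x hx => exact Q1 x hx v hv
  | zero => rw [zero_smul, zero_smul, map_zero]
  | add x y hx hy ihx ihy => rw [add_smul, add_smul, map_add, ihx, ihy]
  | smul k x hx ih => rw [smul_assoc, smul_assoc, F.map_smul, ih]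

lemma chain_squeeze {R V W : Type*} [CommRing R] [AddCommGroup V] [AddCommGroup W]
    [Module R V] [Module R W] [IsNoetherianRing R]
    (F Φ : V →ₗ[R] W) (X M : Submodule R V) (hXM : X ≤ M) (hMfg : M.FG)
    (hinj : ∀ v ∈ M, Φ v = 0 → v = 0)
    (hFM : M.map F = M.map Φ)
    (h0 : X.map F ≤ X.map Φ) :
    X.map F = X.map Φ := by
  haveI : IsNoetherian R M := isNoetherian_of_fg_of_noetherian M hMfg
  let C : ℕ → Submodule R V := fun n => Nat.rec X (fun _ Cn => ((Cn.map Φ).comap F) ⊓ M) n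
  have hC0 : C 0 = X := rfl
  have hCs : ∀ n, C (n + 1) = (((C n).map Φ).comap F) ⊓ M := fun n => rfl
  have hCM : ∀ n, C n ≤ M := by
    intro n
    cases n with
    | zero => exact hXM
    | succ n => rw [hCs]; exact inf_le_right
  have hstep : ∀ n, C n ≤ C (n + 1) := by
    intro n
    induction n with
    | zero =>
      rw [hCs, hC0]
      refine le_inf (fun x hx => ?_) hXM
      exact h0 (Submodule.mem_map_of_mem hx)
    | succ n ih =>
      rw [hCs n, hCs (n + 1)]
      exact inf_le_inf (Submodule.comap_mono (Submodule.map_mono ih)) le_rfl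
  have hmono : Monotone C := monotone_nat_of_le_succ hstep
  have key : ∀ n, (C (n + 1)).map F = (C n).map Φ := by
    intro n
    apply le_antisymm
    · rintro w ⟨v, hv, rfl⟩
      rw [hCs] at hv
      exact hv.1
    · rintro w hw
      have hw' : w ∈ M.map F := by
        rw [hFM]
        exact Submodule.map_mono (hCM n) hw
      obtain ⟨v, hvM, rfl⟩ := hw'
      exact ⟨v, by rw [hCs]; exact ⟨hw, hvM⟩, rfl⟩
  obtain ⟨n, hn⟩ := monotone_stabilizes_iff_noetherian.mpr inferInstance
    ⟨fun n => (C n).comap M.subtype, fun i j hij => Submodule.comap_mono (hmono hij)⟩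
  have hCeq : C n = C (n + 1) := by
    have h1 : (C n).comap M.subtype = (C (n + 1)).comap M.subtype := hn (n + 1) (Nat.le_succ n)
    have h2 : ∀ m, ((C m).comap M.subtype).map M.subtype = C m := by
      intro m
      rw [Submodule.map_comap_subtype, inf_eq_right.mpr (hCM m)]
    rw [← h2 n, ← h2 (n + 1), h1]
  have down : ∀ m, C (m + 1) = C (m + 2) → C m = C (m + 1) := by
    intro m hm
    have hΦeq : (C m).map Φ = (C (m + 1)).map Φ := by
      rw [← key m, ← key (m + 1), ← hm]
    refine le_antisymm (hstep m) ?_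
    intro v hv
    have : Φ v ∈ (C m).map Φ := by rw [hΦeq]; exact Submodule.mem_map_of_mem hv
    obtain ⟨u, hu, huv⟩ := this
    have hvu : v - u ∈ M := Submodule.sub_mem _ (hCM (m + 1) hv) (hCM (m + 1) (hstep m hu))
    have : Φ (v - u) = 0 := by rw [map_sub, huv, sub_self]
    have := hinj _ hvu this
    have : v = u := by rwa [sub_eq_zero] at this
    rwa [this]
  have alln : ∀ j, C (n - j) = C (n - j + 1) := by
    intro j
    induction j with
    | zero => simpa using hCeq
    | succ j ih =>
      rcases Nat.lt_or_ge j n with hj | hj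
      · have e1 : n - (j + 1) + 1 = n - j := by omega
        have e2 : n - (j + 1) + 2 = n - j + 1 := by omega
        apply down
        rw [e1, e2]
        exact ih
      · have : n - (j + 1) = n - j := by omega
        rw [this]
        exact ih
  have h01 : C 0 = C (0 + 1) := by
    have := alln n
    rwa [Nat.sub_self] at this
  have key0 := key 0
  rw [← h01] at key0
  exact key0

lemma exists_extend {R₀ K V W : Type*} [CommRing R₀] [IsDomain R₀] [Field K] [Algebra R₀ K]
    [IsFractionRing R₀ K]
    [AddCommGroup V] [Module K V] [Module R₀ V] [IsScalarTower R₀ K V]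
    [AddCommGroup W] [Module K W] [Module R₀ W] [IsScalarTower R₀ K W]
    (P : Submodule R₀ V) (g : P →ₗ[R₀] W) :
    ∃ F : V →ₗ[K] W, ∀ (p : V) (hp : p ∈ P), F p = g ⟨p, hp⟩ := by
  classical
  obtain ⟨b, hbP, hbsp, hbli⟩ := exists_linearIndependent K (P : Set V)
  let B := Module.Basis.extend hbli
  refine ⟨B.constr K (fun i => if h : (i : V) ∈ P then g ⟨(i : V), h⟩ else 0), ?_⟩
  set F := B.constr K (fun i => if h : (i : V) ∈ P then g ⟨(i : V), h⟩ else 0) with hF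
  have key : ∀ x : b, F (x : V) = g ⟨(x : V), hbP x.2⟩ := by
    intro x
    have hxe : (x : V) ∈ LinearIndepOn.extend (K := K) (v := id) hbli (Set.subset_univ b) :=
      LinearIndepOn.subset_extend (K := K) (v := id) hbli _ x.2
    have : (x : V) = B ⟨(x : V), hxe⟩ := (Module.Basis.extend_apply_self hbli ⟨(x : V), hxe⟩).symm
    conv_lhs => rw [this]
    rw [hF, Module.Basis.constr_basis]
    exact dif_pos (hbP x.2)
  intro p hp
  have hps : p ∈ Submodule.span K b := by rw [hbsp]; exact Submodule.subset_span hp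
  rw [mem_span_set'] at hps
  obtain ⟨n, c, xs, hsum⟩ := hps
  obtain ⟨d, hd⟩ := IsLocalization.exist_integer_multiples (nonZeroDivisors R₀) (S := K)
    Finset.univ c
  choose r hr using fun i => hd i (Finset.mem_univ i)
  have hr' : ∀ i, algebraMap R₀ K (r i) = algebraMap R₀ K (d : R₀) * c i := by
    intro i; rw [hr i, Algebra.smul_def]
  have hd0 : algebraMap R₀ K (d : R₀) ≠ 0 := by
    simpa using (IsFractionRing.to_map_ne_zero_iff_ne_zero (A := R₀) (K := K)).mpr
      (nonZeroDivisors.coe_ne_zero d)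
  refine smul_right_injective W hd0 ?_
  have hdp : (d : R₀) • p = ∑ i, r i • (xs i : V) := by
    rw [← hsum, Finset.smul_sum]
    refine Finset.sum_congr rfl fun i _ => ?_
    rw [← algebraMap_smul K (d : R₀) ((c i) • (xs i : V)), smul_smul, ← hr' i,
      algebraMap_smul]
  have hmem : ∀ i : Fin n, (xs i : V) ∈ P := fun i => hbP (xs i).2
  have hsub : ((d : R₀) • (⟨p, hp⟩ : P)) = ∑ i, r i • (⟨(xs i : V), hmem i⟩ : P) := by
    apply Subtype.ext
    push_cast
    exact hdp
  have lhs : algebraMap R₀ K (d : R₀) • (g ⟨p, hp⟩)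
      = ∑ i, (algebraMap R₀ K (d : R₀) * c i) • g ⟨(xs i : V), hmem i⟩ := by
    rw [algebraMap_smul, ← map_smul, hsub, map_sum]
    refine Finset.sum_congr rfl fun i _ => ?_
    rw [map_smul, ← algebraMap_smul K (r i) (g ⟨(xs i : V), hmem i⟩), hr' i]
  have rhs : F p = ∑ i, c i • g ⟨(xs i : V), hmem i⟩ := by
    rw [← hsum, map_sum]
    refine Finset.sum_congr rfl fun i _ => ?_
    rw [map_smul, key (xs i)]
  show algebraMap R₀ K (d : R₀) • F p = algebraMap R₀ K (d : R₀) • (g ⟨p, hp⟩)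
  rw [lhs, rhs, Finset.smul_sum]
  refine Finset.sum_congr rfl fun i _ => ?_
  rw [smul_smul]

lemma exists_denominator {R₀ K V : Type*} [CommRing R₀] [IsDomain R₀] [Field K] [Algebra R₀ K]
    [IsFractionRing R₀ K] [AddCommGroup V] [Module K V] [Module R₀ V] [IsScalarTower R₀ K V]
    (P : Submodule R₀ V) {v : V} (hv : v ∈ Submodule.span K (P : Set V)) :
    ∃ c : R₀, algebraMap R₀ K c ≠ 0 ∧ c • v ∈ P := by
  rw [mem_span_set'] at hv
  obtain ⟨n, c, xs, hsum⟩ := hv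
  obtain ⟨d, hd⟩ := IsLocalization.exist_integer_multiples (nonZeroDivisors R₀) (S := K)
    Finset.univ c
  choose r hr using fun i => hd i (Finset.mem_univ i)
  have hr' : ∀ i, algebraMap R₀ K (r i) = algebraMap R₀ K (d : R₀) * c i := by
    intro i; rw [hr i, Algebra.smul_def]
  refine ⟨d, ?_, ?_⟩
  · simpa using (IsFractionRing.to_map_ne_zero_iff_ne_zero (A := R₀) (K := K)).mpr
      (nonZeroDivisors.coe_ne_zero d)
  · have hdp : (d : R₀) • v = ∑ i, r i • (xs i : V) := by
      rw [← hsum, Finset.smul_sum]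
      refine Finset.sum_congr rfl fun i _ => ?_
      rw [← algebraMap_smul K (d : R₀) ((c i) • (xs i : V)), smul_smul, ← hr' i,
        algebraMap_smul]
    rw [hdp]
    exact Submodule.sum_mem _ fun i _ => Submodule.smul_mem _ _ (xs i).2

lemma exists_denominator_loc {𝒪 K : Type*} [CommRing 𝒪] [Field K] [Algebra 𝒪 K]
    (R : Subalgebra 𝒪 K) (Mset : Submonoid 𝒪) [IsLocalization Mset R]
    {W : Type*} [AddCommGroup W] [Module K W] [Module 𝒪 W] [IsScalarTower 𝒪 K W]
    (P : Submodule 𝒪 W) {y : W} (hy : y ∈ Submodule.span R (P : Set W)) :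
    ∃ s : 𝒪, s ∈ Mset ∧ s • y ∈ P := by
  rw [mem_span_set'] at hy
  obtain ⟨n, c, xs, hsum⟩ := hy
  obtain ⟨d, hd⟩ := IsLocalization.exist_integer_multiples Mset (S := R) Finset.univ c
  choose r hr using fun i => hd i (Finset.mem_univ i)
  refine ⟨d, d.2, ?_⟩
  have hdp : (d : 𝒪) • y = ∑ i, r i • (xs i : W) := by
    rw [← hsum, Finset.smul_sum]
    refine Finset.sum_congr rfl fun i _ => ?_
    rw [← smul_assoc, ← hr i, algebraMap_smul]
  rw [hdp]
  exact Submodule.sum_mem _ fun i _ => Submodule.smul_mem _ _ (xs i).2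

end AuxLemmas

/-- Let `X` and `Y` be locally isomorphic `Λ`-lattices and let
`f : 𝓜X → 𝓜Y` be an isomorphism of `𝓜`-lattices.  Then `f` restricts to an isomorphism
`f|_X : X → Y` of `Λ`-lattices if and only if `f(X) ⊆ Y`. -/
theorem stmt_3
    (𝒪 : Type*) [CommRing 𝒪] [IsDomain 𝒪] [IsDedekindDomain 𝒪]
    (K : Type*) [Field K] [Algebra 𝒪 K] [IsFractionRing 𝒪 K]
    (hOK : ¬ Function.Surjective (algebraMap 𝒪 K))
    (A : Type*) [Ring A] [Algebra K A] [Algebra 𝒪 A] [IsScalarTower 𝒪 K A]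
    [FiniteDimensional K A] [IsSemisimpleRing A] [Algebra.IsSeparable K A]
    (Λ 𝓜 : Subalgebra 𝒪 A) (hΛ : IsOrder 𝒪 K A Λ)
    (h𝓜 : IsMaximalOrder 𝒪 K A 𝓜) (hΛ𝓜 : Λ ≤ 𝓜)
    (V : Type*) [AddCommGroup V] [Module K V] [Module 𝒪 V] [IsScalarTower 𝒪 K V]
    [Module A V] [IsScalarTower K A V]
    (W : Type*) [AddCommGroup W] [Module K W] [Module 𝒪 W] [IsScalarTower 𝒪 K W]
    [Module A W] [IsScalarTower K A W]
    (X : Submodule 𝒪 V) (hXfg : X.FG) (hXst : SetStable (Λ : Set A) X)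
    (Y : Submodule 𝒪 W) (hYfg : Y.FG) (hYst : SetStable (Λ : Set A) Y)
    (hloc : LocallyIsomorphic 𝒪 K A Λ X Y)
    (f : (Submodule.span 𝒪 {v : V | ∃ a ∈ 𝓜, ∃ x ∈ X, v = a • x}) →ₗ[𝒪]
      (Submodule.span 𝒪 {w : W | ∃ a ∈ 𝓜, ∃ y ∈ Y, w = a • y}))
    (hfb : Function.Bijective f)
    (hfe : IsEquivMap (𝓜 : Set A)
      (Submodule.span 𝒪 {v : V | ∃ a ∈ 𝓜, ∃ x ∈ X, v = a • x})
      (Submodule.span 𝒪 {w : W | ∃ a ∈ 𝓜, ∃ y ∈ Y, w = a • y}) f) :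
    -- `f` restricts to an isomorphism of `Λ`-lattices `X → Y`
    (∃ g : X →ₗ[𝒪] Y, Function.Bijective g ∧ IsEquivMap (Λ : Set A) X Y g ∧
      ∀ (x : V) (hx : x ∈ X)
        (hx' : x ∈ Submodule.span 𝒪 {v : V | ∃ a ∈ 𝓜, ∃ x ∈ X, v = a • x}),
        ((g ⟨x, hx⟩ : Y) : W) = ((f ⟨x, hx'⟩ :
          Submodule.span 𝒪 {w : W | ∃ a ∈ 𝓜, ∃ y ∈ Y, w = a • y}) : W))
    ↔
    -- `f(X) ⊆ Y`
    (∀ (x : V) (hx' : x ∈ Submodule.span 𝒪 {v : V | ∃ a ∈ 𝓜, ∃ x ∈ X, v = a • x}),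
      x ∈ X → ((f ⟨x, hx'⟩ :
        Submodule.span 𝒪 {w : W | ∃ a ∈ 𝓜, ∃ y ∈ Y, w = a • y}) : W) ∈ Y) := by
  classical
  haveI hTAV : IsScalarTower 𝒪 A V := ⟨fun r a v => by
    rw [← algebraMap_smul K r a, smul_assoc, algebraMap_smul]⟩
  revert f hfb hfe
  set MXset : Set V := {v : V | ∃ a ∈ 𝓜, ∃ x ∈ X, v = a • x} with hMXsetdef
  set MYset : Set W := {w : W | ∃ a ∈ 𝓜, ∃ y ∈ Y, w = a • y} with hMYsetdef
  set MX : Submodule 𝒪 V := Submodule.span 𝒪 MXset with hMXdef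
  set MY : Submodule 𝒪 W := Submodule.span 𝒪 MYset with hMYdef
  intro f hfb hfe
  have hXMX : ∀ {x : V}, x ∈ X → x ∈ MX := fun {x} hx =>
    Submodule.subset_span ⟨1, 𝓜.one_mem, x, hx, (one_smul A x).symm⟩
  obtain ⟨F, hFf⟩ := exists_extend (K := K) MX (MY.subtype.comp f)
  have hFf' : ∀ (p : V) (hp : p ∈ MX), F p = ((f ⟨p, hp⟩ : MY) : W) := hFf
  constructor
  · rintro ⟨g, hgb, hge, hgc⟩ x hx' hx
    rw [← hgc x hx hx']
    exact (g ⟨x, hx⟩).2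
  · intro hsub
    have hFX : ∀ {x : V}, x ∈ X → F x ∈ Y := fun {x} hx => by
      rw [hFf' x (hXMX hx)]; exact hsub x (hXMX hx) hx
    have hFinj : ∀ v ∈ MX, F v = 0 → v = 0 := by
      intro v hv h0
      rw [hFf' v hv] at h0
      have h1 : f ⟨v, hv⟩ = 0 := Subtype.ext h0
      have h2 : (⟨v, hv⟩ : MX) = 0 := hfb.1 (by rw [h1, map_zero])
      simpa using congrArg Subtype.val h2
    set F𝒪 : V →ₗ[𝒪] W := F.restrictScalars 𝒪 with hF𝒪def
    set X' : Submodule 𝒪 W := X.map F𝒪 with hX'def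
    have hMXsetK : MXset ⊆ ↑(Submodule.span K (X : Set V)) := by
      rintro v ⟨a, ha, x, hx, rfl⟩
      have ha' : a ∈ Submodule.span K (Λ : Set A) := by rw [hΛ.2]; exact Submodule.mem_top
      clear ha
      induction ha' using Submodule.span_induction with
      | mem l hl => exact Submodule.subset_span (hXst l hl x hx)
      | zero => rw [zero_smul]; exact Submodule.zero_mem _
      | add p q hp hq ihp ihq => rw [add_smul]; exact Submodule.add_mem _ ihp ihq
      | smul k p hp ih => rw [smul_assoc]; exact Submodule.smul_mem _ _ ih
    have hMXfg : MX.FG := by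
      obtain ⟨sM, hsM⟩ := h𝓜.1.1
      obtain ⟨sX, hsX⟩ := hXfg
      rw [Submodule.fg_def]
      refine ⟨Set.image2 (· • ·) (sM : Set A) (sX : Set V),
        Set.Finite.image2 _ sM.finite_toSet sX.finite_toSet, le_antisymm ?_ ?_⟩
      · rw [Submodule.span_le]
        rintro v ⟨a, ha, x, hx, rfl⟩
        have haM : a ∈ 𝓜 := by
          have h1 : a ∈ Submodule.span 𝒪 (sM : Set A) := Submodule.subset_span ha
          rw [hsM] at h1
          exact h1
        have hxX : x ∈ X := by
          have h1 : x ∈ Submodule.span 𝒪 (sX : Set V) := Submodule.subset_span hx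
          rwa [hsX] at h1
        exact Submodule.subset_span ⟨a, haM, x, hxX, rfl⟩
      · rw [hMXdef, Submodule.span_le]
        rintro v ⟨a, ha, x, hx, rfl⟩
        have ha' : a ∈ Submodule.span 𝒪 (sM : Set A) := by
          rw [hsM]; exact ha
        have hx' : x ∈ Submodule.span 𝒪 (sX : Set V) := by rw [hsX]; exact hx
        clear ha hx
        induction ha' using Submodule.span_induction with
        | mem m hm =>
          induction hx' using Submodule.span_induction with
          | mem z hz => exact Submodule.subset_span (Set.mem_image2_of_mem hm hz)
          | zero => rw [smul_zero]; exact Submodule.zero_mem _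
          | add p q hp hq ihp ihq => rw [smul_add]; exact Submodule.add_mem _ ihp ihq
          | smul r z hz ih => rw [osmul_comm (𝒪 := 𝒪) (K := K) r m z]; exact Submodule.smul_mem _ _ ih
        | zero => rw [zero_smul]; exact Submodule.zero_mem _
        | add p q hp hq ihp ihq => rw [add_smul]; exact Submodule.add_mem _ ihp ihq
        | smul r p hp ih => rw [smul_assoc]; exact Submodule.smul_mem _ _ ih
    -- main surjectivity statement
    have hsur : ∀ y ∈ Y, y ∈ X' := by
      intro y hy
      by_contra hyn
      let I : Ideal 𝒪 :=
        { carrier := {s : 𝒪 | s • y ∈ X'}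
          add_mem' := fun {a b} ha hb => by
            simp only [Set.mem_setOf_eq] at *
            rw [add_smul]; exact X'.add_mem ha hb
          zero_mem' := by
            simp only [Set.mem_setOf_eq, zero_smul]; exact X'.zero_mem
          smul_mem' := fun c s hs => by
            simp only [Set.mem_setOf_eq, smul_eq_mul] at *
            rw [mul_smul]; exact X'.smul_mem c hs }
      have hI : I ≠ ⊤ := by
        intro hItop
        have h1 : (1 : 𝒪) ∈ I := hItop ▸ Submodule.mem_top
        have h2 : (1 : 𝒪) • y ∈ X' := h1
        rw [one_smul] at h2
        exact hyn h2
      obtain ⟨𝔪, h𝔪, hI𝔪⟩ := Ideal.exists_le_maximal I hI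
      set R := localizationAt 𝒪 K 𝔪 h𝔪.isPrime with hR
      haveI hRloc : IsLocalization 𝔪.primeCompl R :=
        Localization.subalgebra.isLocalization_subalgebra _ _ _
      haveI hRfr : IsFractionRing R K :=
        Localization.subalgebra.isFractionRing _ _ _
      haveI hRnoeth : IsNoetherianRing R :=
        IsLocalization.isNoetherianRing 𝔪.primeCompl R inferInstance
      obtain ⟨φ, hφb, hφe⟩ := hloc 𝔪 h𝔪
      set X𝔭 : Submodule R V := Submodule.span R (X : Set V) with hX𝔭
      set Y𝔭 : Submodule R W := Submodule.span R (Y : Set W) with hY𝔭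
      let φ' : X𝔭 →ₗ[R] Y𝔭 := φ
      have hφb' : Function.Bijective φ' := hφb
      have hφe' : ∀ a ∈ (Λ : Set A), ∀ (v : V) (hv : v ∈ X𝔭) (hav : a • v ∈ X𝔭),
          ((φ' ⟨a • v, hav⟩ : Y𝔭) : W) = a • ((φ' ⟨v, hv⟩ : Y𝔭) : W) := hφe
      obtain ⟨Φ, hΦφ⟩ := exists_extend (K := K) X𝔭 (Y𝔭.subtype.comp φ')
      have hΦφ' : ∀ (p : V) (hp : p ∈ X𝔭), Φ p = ((φ' ⟨p, hp⟩ : Y𝔭) : W) := hΦφ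
      have hXst𝔭 : ∀ a ∈ (Λ : Set A), ∀ v ∈ X𝔭, a • v ∈ X𝔭 := by
        intro a ha
        exact smul_mem_span R a _ _ (fun x hx => Submodule.subset_span (hXst a ha x hx))
      have hΦbase : ∀ a ∈ (Λ : Set A), ∀ v ∈ (X𝔭 : Set V), Φ (a • v) = a • Φ v := by
        intro a ha v hv
        have hav := hXst𝔭 a ha v hv
        rw [hΦφ' v hv, hΦφ' (a • v) hav]
        exact hφe' a ha v hv hav
      have hΦeq : ∀ (a : A) (v : V), v ∈ Submodule.span K (X𝔭 : Set V) →
          Φ (a • v) = a • Φ v := by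
        intro a v hv
        have ha : a ∈ Submodule.span K (Λ : Set A) := by rw [hΛ.2]; exact Submodule.mem_top
        exact equivariant_extend Φ _ _ hΦbase a ha v hv
      set M : Submodule R V := Submodule.span R (MX : Set V) with hM
      have hXM : X𝔭 ≤ M := Submodule.span_mono (fun x hx => hXMX hx)
      have hMfg : M.FG := by
        obtain ⟨s, hs⟩ := hMXfg
        rw [Submodule.fg_def]
        refine ⟨(s : Set V), s.finite_toSet, ?_⟩
        rw [hM, ← hs]
        exact (Submodule.span_span_of_tower 𝒪 R ((s : Set V))).symm
      have hMspanK : ∀ v ∈ M, v ∈ Submodule.span K (X𝔭 : Set V) := by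
        have h1 : (MX : Set V) ⊆ ↑(Submodule.span K (X𝔭 : Set V)) := by
          have h2 : MX ≤ (Submodule.span K (X𝔭 : Set V)).restrictScalars 𝒪 := by
            rw [hMXdef, Submodule.span_le]
            exact fun v hv =>
              Submodule.span_mono (fun x hx => Submodule.subset_span hx) (hMXsetK hv)
          exact h2
        intro v hv
        induction hv using Submodule.span_induction with
        | mem m hm => exact h1 hm
        | zero => exact Submodule.zero_mem _
        | add p q hp hq ihp ihq => exact Submodule.add_mem _ ihp ihq
        | smul r x hx ih => exact Submodule.smul_mem _ (r : K) ih
      have hinj : ∀ v ∈ M, Φ v = 0 → v = 0 := by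
        intro v hv h0
        obtain ⟨c, hc0, hcv⟩ := exists_denominator (K := K) X𝔭 (hMspanK v hv)
        have h1 : Φ (c • v) = 0 := by
          have h2 : Φ (c • v) = (c : K) • Φ v := Φ.map_smul (c : K) v
          rw [h2, h0, smul_zero]
        rw [hΦφ' (c • v) hcv] at h1
        have h2 : φ' ⟨c • v, hcv⟩ = 0 := Subtype.ext h1
        have h3 : (⟨c • v, hcv⟩ : X𝔭) = 0 := hφb'.1 (by rw [h2, map_zero])
        have h4 : (c : K) • v = 0 := congrArg Subtype.val h3
        have hc0' : (c : K) ≠ 0 := hc0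
        rcases smul_eq_zero.mp h4 with h | h
        · exact absurd h hc0'
        · exact h
      have himg : ⇑F '' (MX : Set V) = (MY : Set W) := by
        apply Set.Subset.antisymm
        · rintro w ⟨v, hv, rfl⟩
          rw [hFf' v hv]
          exact (f ⟨v, hv⟩).2
        · intro w hw
          obtain ⟨q, hq⟩ := hfb.2 ⟨w, hw⟩
          refine ⟨(q : V), q.2, ?_⟩
          rw [hFf' (q : V) q.2]
          exact congrArg Subtype.val hq
      have hc1 : M.map (F.restrictScalars R) = Submodule.span R (MY : Set W) := by
        rw [hM, Submodule.map_span, LinearMap.coe_restrictScalars, himg]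
      have hMYsmul : ∀ a ∈ 𝓜, ∀ w ∈ Y𝔭, a • w ∈ Submodule.span R (MY : Set W) := by
        intro a ha
        exact smul_mem_span R a _ _ (fun w hw =>
          Submodule.subset_span (Submodule.subset_span ⟨a, ha, w, hw, rfl⟩))
      have hMXsmul : ∀ a ∈ 𝓜, ∀ v ∈ X𝔭, a • v ∈ M := by
        intro a ha
        exact smul_mem_span R a _ _ (fun x hx =>
          Submodule.subset_span (Submodule.subset_span ⟨a, ha, x, hx, rfl⟩))
      have hΦYmem : ∀ (v : V) (hv : v ∈ X𝔭), Φ v ∈ Y𝔭 := fun v hv => by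
        rw [hΦφ' v hv]; exact (φ' ⟨v, hv⟩).2
      have hc2 : M.map (Φ.restrictScalars R) = Submodule.span R (MY : Set W) := by
        apply le_antisymm
        · rw [hM, Submodule.map_le_iff_le_comap, Submodule.span_le]
          intro v hv
          show Φ v ∈ Submodule.span R (MY : Set W)
          have hset : MXset ⊆ ↑(Submodule.comap (Φ.restrictScalars 𝒪)
              ((Submodule.span R (MY : Set W)).restrictScalars 𝒪)) := by
            rintro u ⟨a, ha, x, hx, rfl⟩
            show Φ (a • x) ∈ Submodule.span R (MY : Set W)
            rw [hΦeq a x (Submodule.subset_span (Submodule.subset_span hx))]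
            exact hMYsmul a ha _ (hΦYmem x (Submodule.subset_span hx))
          exact (Submodule.span_le.mpr hset) (show v ∈ MX from hv)
        · rw [Submodule.span_le]
          intro w hw
          have hset : MYset ⊆ ↑((M.map (Φ.restrictScalars R)).restrictScalars 𝒪) := by
            rintro u ⟨a, ha, yy, hyy, rfl⟩
            obtain ⟨q, hq⟩ := hφb'.2 ⟨yy, Submodule.subset_span hyy⟩
            have hΦq : Φ (q : V) = yy := by
              rw [hΦφ' (q : V) q.2]
              exact congrArg Subtype.val hq
            show a • yy ∈ M.map (Φ.restrictScalars R)
            rw [← hΦq, ← hΦeq a (q : V) (Submodule.subset_span q.2)]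
            exact Submodule.mem_map_of_mem (hMXsmul a ha (q : V) q.2)
          exact (Submodule.span_le.mpr hset) (show w ∈ MY from hw)
      have hc3 : X𝔭.map (Φ.restrictScalars R) = Y𝔭 := by
        apply le_antisymm
        · rintro w ⟨v, hv, rfl⟩
          exact hΦYmem v hv
        · intro w hw
          obtain ⟨q, hq⟩ := hφb'.2 ⟨w, hw⟩
          refine ⟨(q : V), q.2, ?_⟩
          show Φ (q : V) = w
          rw [hΦφ' (q : V) q.2]
          exact congrArg Subtype.val hq
      have h0 : X𝔭.map (F.restrictScalars R) ≤ X𝔭.map (Φ.restrictScalars R) := by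
        rw [hc3, hX𝔭, Submodule.map_span, LinearMap.coe_restrictScalars]
        apply Submodule.span_le.mpr
        rintro w ⟨x, hx, rfl⟩
        exact Submodule.subset_span (hFX hx)
      have hFM : M.map (F.restrictScalars R) = M.map (Φ.restrictScalars R) := by
        rw [hc1, hc2]
      have hchain := chain_squeeze (F.restrictScalars R) (Φ.restrictScalars R)
        X𝔭 M hXM hMfg hinj hFM h0
      have hyX' : y ∈ Submodule.span R (X' : Set W) := by
        have h1 : y ∈ Y𝔭 := Submodule.subset_span hy
        rw [← hc3, ← hchain, hX𝔭, Submodule.map_span, LinearMap.coe_restrictScalars] at h1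
        have himg2 : ⇑F '' (X : Set V) = (X' : Set W) := by
          rw [hX'def, Submodule.map_coe]
          rfl
        rwa [himg2] at h1
      obtain ⟨s, hs𝔪, hsX'⟩ := exists_denominator_loc R 𝔪.primeCompl X' hyX'
      exact hs𝔪 (hI𝔪 hsX')
    refine ⟨LinearMap.codRestrict Y ((F.restrictScalars 𝒪).comp X.subtype)
      (fun x => hFX x.2), ⟨?_, ?_⟩, ?_, ?_⟩
    · intro u v huv
      have h1 : F (u : V) = F (v : V) := congrArg Subtype.val huv
      have h2 : F ((u : V) - (v : V)) = 0 := by rw [map_sub, h1, sub_self]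
      have h3 := hFinj _ (MX.sub_mem (hXMX u.2) (hXMX v.2)) h2
      exact Subtype.ext (by rwa [sub_eq_zero] at h3)
    · rintro ⟨w, hw⟩
      obtain ⟨x, hx, hxw⟩ := hsur w hw
      exact ⟨⟨x, hx⟩, Subtype.ext hxw⟩
    · intro a ha v hv hav
      show F (a • v) = a • F v
      rw [hFf' (a • v) (hXMX hav), hFf' v (hXMX hv)]
      exact hfe a (hΛ𝓜 ha) v (hXMX hv) (hXMX hav)
    · intro x hx hx'
      exact hFf' x hx'
end

section
/- Let X and Y be locally isomorphic Λ-lattices such that there exists an isomorphism of 𝓜-lattices f : 𝓜X → 𝓜Y. Then f restricts to an isomorphism f|_X : X → Y of Λ-lattices if and only if Y ⊆ f(X). -/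
open Submodule Function

section Helpers

variable {K : Type*} [Field K] {A : Type*} [Ring A] [Algebra K A]
variable {V : Type*} [AddCommGroup V] [Module K V] [Module A V] [IsScalarTower K A V]

/-- scalars from `K` commute with the `A`-action. -/
theorem kSmul_comm (a : A) (k : K) (v : V) : a • (k • v) = k • (a • v) := by
  rw [← algebraMap_smul A k v, ← mul_smul, ← Algebra.commutes k a, mul_smul,
    algebraMap_smul A k (a • v)]

variable (K) {R : Type*} [CommRing R] [Algebra R K] [Module R V] [IsScalarTower R K V]

include K in
/-- scalars from `R` (mapping to `K`) commute with the `A`-action. -/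
theorem rSmul_comm (a : A) (r : R) (v : V) : a • (r • v) = r • (a • v) := by
  rw [← algebraMap_smul K r v, kSmul_comm, algebraMap_smul]

include K in
theorem rSmul_assoc [Module R A] [IsScalarTower R K A] (r : R) (a : A) (v : V) :
    (r • a) • v = r • (a • v) := by
  rw [← algebraMap_smul K r a, smul_assoc, algebraMap_smul]

end Helpers

section Ext

variable {K : Type*} [Field K]
variable {V : Type*} [AddCommGroup V] [Module K V]
variable {W : Type*} [AddCommGroup W] [Module K W]
variable {R : Type*} [CommRing R] [Algebra R K] [Module R V] [Module R W]
variable [IsScalarTower R K V] [IsScalarTower R K W]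

/-- Extension of an `R`-linear map on an `R`-submodule to a `K`-linear map on a
`K`-submodule, provided denominators exist. -/
theorem ext_lemma
    (hfrac : ∀ k : K, ∃ a b : R, algebraMap R K b ≠ 0 ∧ k * algebraMap R K b = algebraMap R K a)
    (U : Submodule K V) (M : Submodule R V)
    (hdenom : ∀ v ∈ U, ∃ c : R, algebraMap R K c ≠ 0 ∧ c • v ∈ M)
    (f : M →ₗ[R] W) :
    ∃ F : U →ₗ[K] W, ∀ (v : V) (hv : v ∈ U) (c : R) (_ : algebraMap R K c ≠ 0)
      (hcv : c • v ∈ M), F ⟨v, hv⟩ = (algebraMap R K c)⁻¹ • f ⟨c • v, hcv⟩ := by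
  classical
  have hRV : ∀ (r : R) (x : V), r • x = algebraMap R K r • x :=
    fun r x => (algebraMap_smul K r x).symm
  have hRW : ∀ (r : R) (x : W), r • x = algebraMap R K r • x :=
    fun r x => (algebraMap_smul K r x).symm
  -- `f` respects `K`-multiples between elements of `M`
  have hkey : ∀ (m₁ m₂ : V) (h₁ : m₁ ∈ M) (h₂ : m₂ ∈ M) (κ : K), m₁ = κ • m₂ →
      f ⟨m₁, h₁⟩ = κ • f ⟨m₂, h₂⟩ := by
    intro m₁ m₂ h₁ h₂ κ hm
    obtain ⟨a, b, hb, hab⟩ := hfrac κ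
    have h1 : b • m₁ = a • m₂ := by
      rw [hm, hRV b, hRV a, smul_smul, mul_comm, hab]
    have h2 : f (b • ⟨m₁, h₁⟩) = f (a • ⟨m₂, h₂⟩) := by
      congr 1; exact Subtype.ext h1
    rw [map_smul, map_smul, hRW, hRW] at h2
    have hκ : κ = algebraMap R K a * (algebraMap R K b)⁻¹ := by
      field_simp [← hab]
      exact hab
    rw [hκ, mul_comm, mul_smul, ← h2, ← mul_smul, inv_mul_cancel₀ hb, one_smul]
  choose c hc0 hcM using hdenom
  set F₀ : U → W := fun u => (algebraMap R K (c u.1 u.2))⁻¹ • f ⟨c u.1 u.2 • u.1, hcM u.1 u.2⟩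
    with hF₀
  have wd : ∀ (v : V) (hv : v ∈ U) (d : R) (_ : algebraMap R K d ≠ 0) (hd : d • v ∈ M),
      F₀ ⟨v, hv⟩ = (algebraMap R K d)⁻¹ • f ⟨d • v, hd⟩ := by
    intro v hv d hd0 hd
    have he0 := hc0 v hv
    have heM := hcM v hv
    have h1 : c v hv • v = (algebraMap R K (c v hv) * (algebraMap R K d)⁻¹) • (d • v) := by
      rw [hRV d, smul_smul, hRV (c v hv)]
      congr 1
      field_simp
    have h2 := hkey (c v hv • v) (d • v) heM hd _ h1
    show (algebraMap R K (c v hv))⁻¹ • f ⟨c v hv • v, heM⟩ = _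
    rw [h2, smul_smul]
    congr 1
    field_simp
  have hadd : ∀ u u' : U, F₀ (u + u') = F₀ u + F₀ u' := by
    rintro ⟨v, hv⟩ ⟨v', hv'⟩
    have hc1 := hc0 v hv; have hc2 := hc0 v' hv'
    have hM1 := hcM v hv; have hM2 := hcM v' hv'
    have hd0 : algebraMap R K (c v hv * c v' hv') ≠ 0 := by
      rw [map_mul]; exact mul_ne_zero hc1 hc2
    have hdM : (c v hv * c v' hv') • (v + v') ∈ M := by
      rw [smul_add]
      refine add_mem ?_ ?_
      · rw [mul_comm, mul_smul]; exact M.smul_mem _ hM1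
      · rw [mul_smul]; exact M.smul_mem _ hM2
    have h1 : F₀ (⟨v, hv⟩ + ⟨v', hv'⟩) = (algebraMap R K (c v hv * c v' hv'))⁻¹ •
        f ⟨(c v hv * c v' hv') • (v + v'), hdM⟩ := wd (v + v') (add_mem hv hv') _ hd0 hdM
    rw [h1, wd v hv _ hc1 hM1, wd v' hv' _ hc2 hM2]
    have hsplit : (⟨(c v hv * c v' hv') • (v + v'), hdM⟩ : M) =
        (c v' hv') • ⟨c v hv • v, hM1⟩ + (c v hv) • ⟨c v' hv' • v', hM2⟩ := by
      apply Subtype.ext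
      show (c v hv * c v' hv') • (v + v') = c v' hv' • (c v hv • v) + c v hv • (c v' hv' • v')
      rw [smul_add, smul_smul, smul_smul]
      congr 1
      rw [mul_comm]
    rw [hsplit, map_add, map_smul, map_smul, hRW (c v' hv'), hRW (c v hv), smul_add,
      map_mul, smul_smul, smul_smul, mul_inv]
    congr 1
    · congr 1
      field_simp
      try ring
    · congr 1
      field_simp
      try ring
  have hsmul : ∀ (k : K) (u : U), F₀ (k • u) = k • F₀ u := by
    rintro k ⟨v, hv⟩
    obtain ⟨a, b, hb0, hab⟩ := hfrac k
    have hc1 := hc0 v hv; have hM1 := hcM v hv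
    have hd0 : algebraMap R K (b * c v hv) ≠ 0 := by
      rw [map_mul]; exact mul_ne_zero hb0 hc1
    have hvk : (b * c v hv) • (k • v) = a • (c v hv • v) := by
      rw [hRV (b * c v hv), hRV a, hRV (c v hv), map_mul, smul_smul, smul_smul]
      congr 1
      linear_combination algebraMap R K (c v hv) * hab
    have hdM : (b * c v hv) • (k • v) ∈ M := by
      rw [hvk]; exact M.smul_mem _ hM1
    have hku : (k • (⟨v, hv⟩ : U)) = ⟨k • v, U.smul_mem k hv⟩ := rfl
    rw [hku, wd (k • v) _ _ hd0 hdM, wd v hv _ hc1 hM1]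
    have heq : (⟨(b * c v hv) • (k • v), hdM⟩ : M) = a • ⟨c v hv • v, hM1⟩ :=
      Subtype.ext hvk
    rw [heq, map_smul, hRW a, smul_smul, smul_smul, map_mul]
    congr 1
    field_simp
    try linear_combination algebraMap R K (c v hv) * hab
    try linear_combination - algebraMap R K (c v hv) * hab
    linear_combination -hab
  refine ⟨{ toFun := F₀, map_add' := hadd, map_smul' := hsmul }, ?_⟩
  intro v hv d hd0 hd
  exact wd v hv d hd0 hd

end Ext

section Denom

variable {𝒪 : Type*} [CommRing 𝒪] [IsDomain 𝒪]
variable {K : Type*} [Field K] [Algebra 𝒪 K] [IsFractionRing 𝒪 K]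
variable {V : Type*} [AddCommGroup V] [Module K V] [Module 𝒪 V] [IsScalarTower 𝒪 K V]

theorem frac_lemma :
    ∀ k : K, ∃ a b : 𝒪, algebraMap 𝒪 K b ≠ 0 ∧
      k * algebraMap 𝒪 K b = algebraMap 𝒪 K a := by
  intro k
  obtain ⟨⟨a, s⟩, h⟩ := IsLocalization.surj (nonZeroDivisors 𝒪) k
  refine ⟨a, s, ?_, h⟩
  intro h0
  exact nonZeroDivisors.ne_zero s.2 (IsFractionRing.injective 𝒪 K (h0.trans (map_zero _).symm))

theorem denom_lemma (M : Submodule 𝒪 V) :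
    ∀ v ∈ Submodule.span K (M : Set V), ∃ c : 𝒪, algebraMap 𝒪 K c ≠ 0 ∧ c • v ∈ M := by
  intro v hv
  induction hv using Submodule.span_induction with
  | mem x hx => exact ⟨1, by simp, by rwa [one_smul]⟩
  | zero => exact ⟨1, by simp, by simp⟩
  | add x y _ _ hx hy =>
    obtain ⟨c, hc0, hcM⟩ := hx
    obtain ⟨d, hd0, hdM⟩ := hy
    refine ⟨c * d, by rw [map_mul]; exact mul_ne_zero hc0 hd0, ?_⟩
    rw [smul_add]
    exact add_mem (by rw [mul_comm, mul_smul]; exact M.smul_mem _ hcM)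
      (by rw [mul_smul]; exact M.smul_mem _ hdM)
  | smul k x _ hx =>
    obtain ⟨c, hc0, hcM⟩ := hx
    obtain ⟨a, b, hb0, hab⟩ := frac_lemma (𝒪 := 𝒪) (K := K) k
    refine ⟨b * c, by rw [map_mul]; exact mul_ne_zero hb0 hc0, ?_⟩
    have : (b * c) • (k • x) = a • (c • x) := by
      rw [← algebraMap_smul K (b * c), ← algebraMap_smul K a (c • x),
        ← algebraMap_smul K c x, map_mul, smul_smul, smul_smul]
      congr 1
      linear_combination algebraMap 𝒪 K c * hab
    rw [this]
    exact M.smul_mem _ hcM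

end Denom


section Global

variable {𝒪 : Type*} [CommRing 𝒪] [IsDomain 𝒪]
variable {K : Type*} [Field K] [Algebra 𝒪 K] [IsFractionRing 𝒪 K]
variable {W : Type*} [AddCommGroup W] [Module K W] [Module 𝒪 W] [IsScalarTower 𝒪 K W]

theorem subalg_smul {S : Subalgebra 𝒪 K} (c : 𝒪) (w : W) :
    (algebraMap 𝒪 S c) • w = c • w := by
  show ((algebraMap 𝒪 S c : S) : K) • w = c • w
  have : ((algebraMap 𝒪 S c : S) : K) = algebraMap 𝒪 K c := rfl
  rw [this, algebraMap_smul]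

theorem global_lemma (Y : Submodule 𝒪 W) (z : W)
    (h : ∀ (𝔭 : Ideal 𝒪) (h𝔭 : 𝔭.IsMaximal),
      z ∈ Submodule.span (localizationAt 𝒪 K 𝔭 h𝔭.isPrime) (Y : Set W)) : z ∈ Y := by
  set I : Ideal 𝒪 :=
    { carrier := {c : 𝒪 | c • z ∈ Y}
      add_mem' := fun hc hd => by
        simp only [Set.mem_setOf_eq] at *
        rw [add_smul]; exact add_mem hc hd
      zero_mem' := by simp only [Set.mem_setOf_eq, zero_smul]; exact zero_mem Y
      smul_mem' := fun r c hc => by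
        simp only [Set.mem_setOf_eq] at *
        rw [smul_eq_mul, mul_smul]; exact Y.smul_mem r hc } with hIdef
  have hmem : ∀ c : 𝒪, c ∈ I ↔ c • z ∈ Y := fun c => Iff.rfl
  by_cases hI : I = ⊤
  · have h1 : (1 : 𝒪) ∈ I := hI ▸ Submodule.mem_top
    have := (hmem 1).1 h1
    simpa using this
  obtain ⟨𝔭, hmax, hle⟩ := Ideal.exists_le_maximal I hI
  haveI : IsLocalization 𝔭.primeCompl (localizationAt 𝒪 K 𝔭 hmax.isPrime) := by
    unfold localizationAt; infer_instance
  have h1n : (1 : 𝒪) ∉ 𝔭 := (Ideal.ne_top_iff_one _).1 hmax.ne_top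
  have key : ∀ w ∈ Submodule.span (localizationAt 𝒪 K 𝔭 hmax.isPrime) (Y : Set W),
      ∃ s : 𝒪, s ∉ 𝔭 ∧ s • w ∈ Y := by
    intro w hw
    induction hw using Submodule.span_induction with
    | mem y hy => exact ⟨1, h1n, by simpa using hy⟩
    | zero => exact ⟨1, h1n, by simp⟩
    | add x y _ _ hx hy =>
      obtain ⟨s, hs, hsY⟩ := hx
      obtain ⟨t, ht, htY⟩ := hy
      refine ⟨s * t, fun hm => (hmax.isPrime.mem_or_mem hm).elim hs ht, ?_⟩
      rw [smul_add]
      exact add_mem (by rw [mul_comm, mul_smul]; exact Y.smul_mem _ hsY)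
        (by rw [mul_smul]; exact Y.smul_mem _ htY)
    | smul r w _ hw =>
      obtain ⟨s₁, hs₁, hs₁Y⟩ := hw
      obtain ⟨⟨a, s⟩, hr⟩ := IsLocalization.surj (M := 𝔭.primeCompl) r
      have hsnot : (s : 𝒪) ∉ 𝔭 := s.2
      have h1 : (s : 𝒪) • (r • w) = a • w := by
        rw [← subalg_smul (S := localizationAt 𝒪 K 𝔭 hmax.isPrime) (s : 𝒪) (r • w),
          ← mul_smul, mul_comm, hr, subalg_smul]
      refine ⟨s * s₁, fun hm => (hmax.isPrime.mem_or_mem hm).elim hsnot hs₁, ?_⟩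
      have h2 : ((s : 𝒪) * s₁) • (r • w) = a • (s₁ • w) := by
        rw [mul_comm, mul_smul, h1, smul_comm]
      rw [h2]
      exact Y.smul_mem a hs₁Y
  obtain ⟨s, hs, hsY⟩ := key z (h 𝔭 hmax)
  exact absurd (hle ((hmem s).2 hsY)) hs

end Global

set_option maxHeartbeats 2000000 in
theorem stmt4_aux
    (𝒪 : Type*) [CommRing 𝒪] [IsDomain 𝒪] [IsDedekindDomain 𝒪]
    (K : Type*) [Field K] [Algebra 𝒪 K] [IsFractionRing 𝒪 K]
    (A : Type*) [Ring A] [Algebra K A] [Algebra 𝒪 A] [IsScalarTower 𝒪 K A]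
    (Λ 𝓜 : Subalgebra 𝒪 A) (hΛ : IsOrder 𝒪 K A Λ)
    (h𝓜span : Submodule.span K (𝓜 : Set A) = ⊤)
    (h𝓜fg : (Subalgebra.toSubmodule 𝓜).FG) (hΛ𝓜 : Λ ≤ 𝓜)
    (V : Type*) [AddCommGroup V] [Module K V] [Module 𝒪 V] [IsScalarTower 𝒪 K V]
    [Module A V] [IsScalarTower K A V]
    (W : Type*) [AddCommGroup W] [Module K W] [Module 𝒪 W] [IsScalarTower 𝒪 K W]
    [Module A W] [IsScalarTower K A W]
    (X : Submodule 𝒪 V) (hXst : SetStable (Λ : Set A) X)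
    (Y : Submodule 𝒪 W) (hYfg : Y.FG) (hYst : SetStable (Λ : Set A) Y)
    (hloc : LocallyIsomorphic 𝒪 K A Λ X Y)
    (MXs : Set V) (hMXs : MXs = {v : V | ∃ a ∈ 𝓜, ∃ x ∈ X, v = a • x})
    (MYs : Set W) (hMYs : MYs = {w : W | ∃ a ∈ 𝓜, ∃ y ∈ Y, w = a • y})
    (f : (Submodule.span 𝒪 MXs) →ₗ[𝒪] (Submodule.span 𝒪 MYs))
    (hfb : Function.Bijective f)
    (hfe : IsEquivMap (𝓜 : Set A) (Submodule.span 𝒪 MXs) (Submodule.span 𝒪 MYs) f) :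
    (∃ g : X →ₗ[𝒪] Y, Function.Bijective g ∧ IsEquivMap (Λ : Set A) X Y g ∧
      ∀ (x : V) (hx : x ∈ X) (hx' : x ∈ Submodule.span 𝒪 MXs),
        ((g ⟨x, hx⟩ : Y) : W) = ((f ⟨x, hx'⟩ : Submodule.span 𝒪 MYs) : W))
    ↔
    (∀ y : W, y ∈ Y →
      ∃ (x : V) (hx' : x ∈ Submodule.span 𝒪 MXs),
        x ∈ X ∧ ((f ⟨x, hx'⟩ : Submodule.span 𝒪 MYs) : W) = y) := by
  classical
  have hMXmem : ∀ v : V, v ∈ MXs ↔ ∃ a ∈ 𝓜, ∃ x ∈ X, v = a • x :=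
    fun v => by rw [hMXs]; exact Iff.rfl
  have hMYmem : ∀ w : W, w ∈ MYs ↔ ∃ a ∈ 𝓜, ∃ y ∈ Y, w = a • y :=
    fun w => by rw [hMYs]; exact Iff.rfl
  have hXMX : X ≤ Submodule.span 𝒪 MXs := fun x hx =>
    Submodule.subset_span ((hMXmem x).2 ⟨1, 𝓜.one_mem, x, hx, (one_smul A x).symm⟩)
  have hYMY : Y ≤ Submodule.span 𝒪 MYs := fun y hy =>
    Submodule.subset_span ((hMYmem y).2 ⟨1, 𝓜.one_mem, y, hy, (one_smul A y).symm⟩)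
  constructor
  · rintro ⟨g, hgbij, hgeq, hgcomp⟩ y hy
    obtain ⟨⟨x, hx⟩, hgx⟩ := hgbij.2 ⟨y, hy⟩
    refine ⟨x, hXMX hx, hx, ?_⟩
    rw [← hgcomp x hx (hXMX hx), hgx]
  · intro hY
    set U : Submodule K V := Submodule.span K (X : Set V) with hUdef
    have hXU : ∀ {x : V}, x ∈ X → x ∈ U := fun hx => Submodule.subset_span hx
    have hAX : ∀ (a : A) (x : V), x ∈ X → a • x ∈ U := by
      intro a x hx
      have ha : a ∈ Submodule.span K (Λ : Set A) := hΛ.2 ▸ Submodule.mem_top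
      induction ha using Submodule.span_induction with
      | mem b hb => exact Submodule.subset_span (hXst b hb x hx)
      | zero => rw [zero_smul]; exact U.zero_mem
      | add b c _ _ hb hc => rw [add_smul]; exact U.add_mem hb hc
      | smul k b _ hb => rw [smul_assoc]; exact U.smul_mem k hb
    have hMXU : ∀ {v : V}, v ∈ Submodule.span 𝒪 MXs → v ∈ U := by
      intro v hv
      induction hv using Submodule.span_induction with
      | mem w hw =>
        obtain ⟨a, ha, x, hx, rfl⟩ := (hMXmem w).1 hw
        exact hAX a x hx
      | zero => exact U.zero_mem
      | add x y _ _ hx hy => exact U.add_mem hx hy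
      | smul c x _ hx => rw [← algebraMap_smul K c x]; exact U.smul_mem _ hx
    have hUstab : ∀ (a : A) {v : V}, v ∈ U → a • v ∈ U := by
      intro a v hv
      induction hv using Submodule.span_induction with
      | mem x hx => exact hAX a x hx
      | zero => rw [smul_zero]; exact U.zero_mem
      | add x y _ _ hx hy => rw [smul_add]; exact U.add_mem hx hy
      | smul k x _ hx => rw [kSmul_comm]; exact U.smul_mem k hx
    have hMXst : ∀ a ∈ 𝓜, ∀ {v : V}, v ∈ Submodule.span 𝒪 MXs →
        a • v ∈ Submodule.span 𝒪 MXs := by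
      intro a ha v hv
      induction hv using Submodule.span_induction with
      | mem w hw =>
        obtain ⟨b, hb, x, hx, rfl⟩ := (hMXmem w).1 hw
        rw [← mul_smul]
        exact Submodule.subset_span ((hMXmem _).2 ⟨a * b, 𝓜.mul_mem ha hb, x, hx, rfl⟩)
      | zero => rw [smul_zero]; exact Submodule.zero_mem _
      | add x y _ _ hx hy => rw [smul_add]; exact Submodule.add_mem _ hx hy
      | smul c x _ hx => rw [rSmul_comm K]; exact Submodule.smul_mem _ c hx
    have hdenomX : ∀ v ∈ U, ∃ c : 𝒪, algebraMap 𝒪 K c ≠ 0 ∧ c • v ∈ X :=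
      denom_lemma X
    obtain ⟨F, keyF⟩ := ext_lemma (frac_lemma (𝒪 := 𝒪) (K := K)) U (Submodule.span 𝒪 MXs)
      (fun v hv => (hdenomX v hv).imp (fun c hc => ⟨hc.1, hXMX hc.2⟩))
      ((Submodule.span 𝒪 MYs).subtype ∘ₗ f)
    have FextF : ∀ (m : V) (hm : m ∈ Submodule.span 𝒪 MXs) (hmU : m ∈ U),
        F ⟨m, hmU⟩ = ((f ⟨m, hm⟩ : Submodule.span 𝒪 MYs) : W) := by
      intro m hm hmU
      have h1 : (1 : 𝒪) • m ∈ Submodule.span 𝒪 MXs := by rwa [one_smul]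
      have h2 := keyF m hmU 1 (by simp) h1
      have he : (⟨(1 : 𝒪) • m, h1⟩ : Submodule.span 𝒪 MXs) = ⟨m, hm⟩ :=
        Subtype.ext (one_smul 𝒪 m)
      rw [h2, he, map_one, inv_one, one_smul]
      rfl
    have Finj : Function.Injective F := by
      have hker : ∀ u : U, F u = 0 → u = 0 := by
        rintro ⟨v, hv⟩ h0
        obtain ⟨c, hc0, hcX⟩ := hdenomX v hv
        have h2 := keyF v hv c hc0 (hXMX hcX)
        rw [h0] at h2
        have h3 : ((f ⟨c • v, hXMX hcX⟩ : Submodule.span 𝒪 MYs) : W) = 0 := by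
          rcases smul_eq_zero.1 h2.symm with h | h
          · exact absurd (inv_eq_zero.1 h) hc0
          · exact h
        have h4 : f ⟨c • v, hXMX hcX⟩ = 0 := Subtype.coe_injective (by simpa using h3)
        have h5 : (⟨c • v, hXMX hcX⟩ : Submodule.span 𝒪 MXs) = 0 := by
          apply hfb.1
          rw [h4, map_zero]
        have h6 : c • v = 0 := congrArg Subtype.val h5
        have h7 : algebraMap 𝒪 K c • v = 0 := by rwa [algebraMap_smul]
        have h8 : v = 0 := by
          rcases smul_eq_zero.1 h7 with h | h
          · exact absurd h hc0
          · exact h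
        exact Subtype.ext h8
      intro u u' huu'
      have : F (u - u') = 0 := by rw [map_sub, huu', sub_self]
      have := hker _ this
      rwa [sub_eq_zero] at this
    have Feq : ∀ (a : A) (ha : a ∈ Submodule.span K (𝓜 : Set A)) (v : V) (hv : v ∈ U)
        (hav : a • v ∈ U), F ⟨a • v, hav⟩ = a • F ⟨v, hv⟩ := by
      intro a ha
      induction ha using Submodule.span_induction with
      | mem b hb =>
        intro v hv hav
        obtain ⟨c, hc0, hcX⟩ := hdenomX v hv
        have hcMX : c • v ∈ Submodule.span 𝒪 MXs := hXMX hcX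
        have hbcMX : b • (c • v) ∈ Submodule.span 𝒪 MXs := hMXst b hb hcMX
        have hcbv : c • (b • v) ∈ Submodule.span 𝒪 MXs := by
          rw [← rSmul_comm K]; exact hbcMX
        have h1 := keyF (b • v) hav c hc0 hcbv
        have h2 : (⟨c • b • v, hcbv⟩ : Submodule.span 𝒪 MXs) = ⟨b • (c • v), hbcMX⟩ :=
          Subtype.ext ((rSmul_comm K b c v).symm)
        have h3 := hfe b hb (c • v) hcMX hbcMX
        rw [h1, h2]
        show (algebraMap 𝒪 K c)⁻¹ • ((f ⟨b • (c • v), hbcMX⟩ : Submodule.span 𝒪 MYs) : W) = _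
        rw [h3, ← kSmul_comm b ((algebraMap 𝒪 K c)⁻¹)]
        congr 1
        have h4 := keyF v hv c hc0 hcMX
        rw [h4]
        rfl
      | zero =>
        intro v hv hav
        have h0 : (⟨(0 : A) • v, hav⟩ : U) = 0 := Subtype.ext (zero_smul A v)
        rw [h0, map_zero, zero_smul]
      | add b c _ _ hb hc =>
        intro v hv hav
        have hbv : b • v ∈ U := hUstab b hv
        have hcv : c • v ∈ U := hUstab c hv
        have h0 : (⟨(b + c) • v, hav⟩ : U) = ⟨b • v, hbv⟩ + ⟨c • v, hcv⟩ :=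
          Subtype.ext (add_smul b c v)
        rw [h0, map_add, hb v hv hbv, hc v hv hcv, add_smul]
      | smul k b _ hb =>
        intro v hv hav
        have hbv : b • v ∈ U := hUstab b hv
        have h0 : (⟨(k • b) • v, hav⟩ : U) = k • ⟨b • v, hbv⟩ :=
          Subtype.ext (smul_assoc k b v)
        rw [h0, map_smul, hb v hv hbv, smul_assoc]
    have FeqA : ∀ (a : A) (v : V) (hv : v ∈ U) (hav : a • v ∈ U),
        F ⟨a • v, hav⟩ = a • F ⟨v, hv⟩ :=
      fun a => Feq a (h𝓜span ▸ Submodule.mem_top)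
    set θ : X →ₗ[𝒪] W :=
      (Submodule.span 𝒪 MYs).subtype ∘ₗ f ∘ₗ Submodule.inclusion hXMX with hθdef
    have hθ : ∀ (x : V) (hx : x ∈ X),
        θ ⟨x, hx⟩ = ((f ⟨x, hXMX hx⟩ : Submodule.span 𝒪 MYs) : W) := fun x hx => rfl
    set Z : Submodule 𝒪 W := LinearMap.range θ with hZdef
    have hθF : ∀ (x : V) (hx : x ∈ X), F ⟨x, hXU hx⟩ = θ ⟨x, hx⟩ := by
      intro x hx
      rw [hθ, FextF x (hXMX hx)]
    have hθMY : ∀ x : X, θ x ∈ Submodule.span 𝒪 MYs := fun x => (f _).2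
    have hYZ : Y ≤ Z := by
      intro y hy
      obtain ⟨x, hx', hxX, hfx⟩ := hY y hy
      refine ⟨⟨x, hxX⟩, ?_⟩
      rw [hθ x hxX, ← hfx]
    have hZY : Z ≤ Y := by
      intro z hz
      apply global_lemma (K := K) Y z
      intro 𝔭 hmax
      haveI hlocinst : IsLocalization 𝔭.primeCompl (localizationAt 𝒪 K 𝔭 hmax.isPrime) := by
        unfold localizationAt; infer_instance
      set 𝒪' : Subalgebra 𝒪 K := localizationAt 𝒪 K 𝔭 hmax.isPrime with h𝒪'def
      have hsub : ∀ (r : 𝒪') (w : W), r • w = (r : K) • w := fun r w => rfl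
      have hsubV : ∀ (r : 𝒪') (v : V), r • v = (r : K) • v := fun r v => rfl
      have halgval : ∀ c : 𝒪', algebraMap 𝒪' K c = (c : K) := fun c => rfl
      have halg : ∀ c : 𝒪, algebraMap 𝒪' K (algebraMap 𝒪 𝒪' c) = algebraMap 𝒪 K c :=
        fun c => (IsScalarTower.algebraMap_apply 𝒪 𝒪' K c).symm
      have hfrac' : ∀ k : K, ∃ a b : 𝒪', algebraMap 𝒪' K b ≠ 0 ∧
          k * algebraMap 𝒪' K b = algebraMap 𝒪' K a := by
        intro k
        obtain ⟨a, b, hb0, hab⟩ := frac_lemma (𝒪 := 𝒪) (K := K) k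
        exact ⟨algebraMap 𝒪 𝒪' a, algebraMap 𝒪 𝒪' b, by rwa [halg], by rwa [halg, halg]⟩
      set X𝔭 : Submodule 𝒪' V := Submodule.span 𝒪' (X : Set V) with hX𝔭def
      set Y𝔭 : Submodule 𝒪' W := Submodule.span 𝒪' (Y : Set W) with hY𝔭def
      have hloc' : ExistsLatIso (Λ : Set A) X𝔭 Y𝔭 := hloc 𝔭 hmax
      obtain ⟨h, hhbij, hheq⟩ := hloc'
      have hXX𝔭 : ∀ {x : V}, x ∈ X → x ∈ X𝔭 := fun hx => Submodule.subset_span hx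
      have hYY𝔭 : ∀ {y : W}, y ∈ Y → y ∈ Y𝔭 := fun hy => Submodule.subset_span hy
      have hX𝔭U : ∀ {v : V}, v ∈ X𝔭 → v ∈ U := by
        intro v hv
        induction hv using Submodule.span_induction with
        | mem x hx => exact hXU hx
        | zero => exact U.zero_mem
        | add x y _ _ hx hy => exact U.add_mem hx hy
        | smul r x _ hx => rw [hsubV]; exact U.smul_mem _ hx
      have hdenomG : ∀ v ∈ U, ∃ c : 𝒪', algebraMap 𝒪' K c ≠ 0 ∧ c • v ∈ X𝔭 := by
        intro v hv
        obtain ⟨c, hc0, hcX⟩ := hdenomX v hv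
        refine ⟨algebraMap 𝒪 𝒪' c, by rwa [halg], ?_⟩
        rw [subalg_smul]
        exact hXX𝔭 hcX
      obtain ⟨G, keyG⟩ := ext_lemma hfrac' U X𝔭 hdenomG (Y𝔭.subtype ∘ₗ h)
      have GextH : ∀ (m : V) (hm : m ∈ X𝔭) (hmU : m ∈ U),
          G ⟨m, hmU⟩ = ((h ⟨m, hm⟩ : Y𝔭) : W) := by
        intro m hm hmU
        have h1 : (1 : 𝒪') • m ∈ X𝔭 := by rwa [one_smul]
        have h2 := keyG m hmU 1 (by simp) h1
        have he : (⟨(1 : 𝒪') • m, h1⟩ : X𝔭) = ⟨m, hm⟩ := Subtype.ext (one_smul 𝒪' m)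
        rw [h2, he, map_one, inv_one, one_smul]
        rfl
      have Ginj : Function.Injective G := by
        have hker : ∀ u : U, G u = 0 → u = 0 := by
          rintro ⟨v, hv⟩ h0
          obtain ⟨c, hc0, hcX⟩ := hdenomG v hv
          have h2 := keyG v hv c hc0 hcX
          rw [h0] at h2
          have h3 : ((h ⟨c • v, hcX⟩ : Y𝔭) : W) = 0 := by
            rcases smul_eq_zero.1 h2.symm with hh | hh
            · exact absurd (inv_eq_zero.1 hh) hc0
            · exact hh
          have h4 : h ⟨c • v, hcX⟩ = 0 := Subtype.coe_injective (by simpa using h3)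
          have h5 : (⟨c • v, hcX⟩ : X𝔭) = 0 := by
            apply hhbij.1
            rw [h4, map_zero]
          have h6 : c • v = 0 := congrArg Subtype.val h5
          have h7 : algebraMap 𝒪' K c • v = 0 := by rwa [halgval, ← hsubV]
          have h8 : v = 0 := by
            rcases smul_eq_zero.1 h7 with hh | hh
            · exact absurd hh hc0
            · exact hh
          exact Subtype.ext h8
        intro u u' huu'
        have h9 : G (u - u') = 0 := by rw [map_sub, huu', sub_self]
        have h10 := hker _ h9
        rwa [sub_eq_zero] at h10
      have hX𝔭st : ∀ a ∈ Λ, ∀ {v : V}, v ∈ X𝔭 → a • v ∈ X𝔭 := by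
        intro a ha v hv
        induction hv using Submodule.span_induction with
        | mem x hx => exact hXX𝔭 (hXst a ha x hx)
        | zero => rw [smul_zero]; exact Submodule.zero_mem _
        | add x y _ _ hx hy => rw [smul_add]; exact Submodule.add_mem _ hx hy
        | smul r x _ hx =>
          rw [hsubV, kSmul_comm, ← hsubV]
          exact Submodule.smul_mem _ r hx
      have Geq : ∀ (a : A) (ha : a ∈ Submodule.span K (Λ : Set A)) (v : V) (hv : v ∈ U)
          (hav : a • v ∈ U), G ⟨a • v, hav⟩ = a • G ⟨v, hv⟩ := by
        intro a ha
        induction ha using Submodule.span_induction with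
        | mem b hb =>
          intro v hv hav
          obtain ⟨c, hc0, hcX⟩ := hdenomG v hv
          have hbcX : b • (c • v) ∈ X𝔭 := hX𝔭st b hb hcX
          have hcbv : c • (b • v) ∈ X𝔭 := by
            rw [hsubV, ← kSmul_comm, ← hsubV]
            exact hbcX
          have h1 := keyG (b • v) hav c hc0 hcbv
          have h2 : (⟨c • b • v, hcbv⟩ : X𝔭) = ⟨b • (c • v), hbcX⟩ := by
            apply Subtype.ext
            show c • (b • v) = b • (c • v)
            rw [hsubV, ← kSmul_comm, ← hsubV]
          have h3 := hheq b hb (c • v) hcX hbcX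
          rw [h1, h2]
          show (algebraMap 𝒪' K c)⁻¹ • ((h ⟨b • (c • v), hbcX⟩ : Y𝔭) : W) = _
          rw [h3, ← kSmul_comm b]
          congr 1
          rw [keyG v hv c hc0 hcX]
          rfl
        | zero =>
          intro v hv hav
          have h0 : (⟨(0 : A) • v, hav⟩ : U) = 0 := Subtype.ext (zero_smul A v)
          rw [h0, map_zero, zero_smul]
        | add b c _ _ hb hc =>
          intro v hv hav
          have hbv : b • v ∈ U := hUstab b hv
          have hcv : c • v ∈ U := hUstab c hv
          have h0 : (⟨(b + c) • v, hav⟩ : U) = ⟨b • v, hbv⟩ + ⟨c • v, hcv⟩ :=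
            Subtype.ext (add_smul b c v)
          rw [h0, map_add, hb v hv hbv, hc v hv hcv, add_smul]
        | smul k b _ hb =>
          intro v hv hav
          have hbv : b • v ∈ U := hUstab b hv
          have h0 : (⟨(k • b) • v, hav⟩ : U) = k • ⟨b • v, hbv⟩ :=
            Subtype.ext (smul_assoc k b v)
          rw [h0, map_smul, hb v hv hbv, smul_assoc]
      have GeqA : ∀ (a : A) (v : V) (hv : v ∈ U) (hav : a • v ∈ U),
          G ⟨a • v, hav⟩ = a • G ⟨v, hv⟩ :=
        fun a => Geq a (hΛ.2 ▸ Submodule.mem_top)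
      -- 𝒪'-linear restrictions and the relevant 𝒪'-submodules
      set F' : U →ₗ[𝒪'] W := F.restrictScalars 𝒪' with hF'def
      set G' : U →ₗ[𝒪'] W := G.restrictScalars 𝒪' with hG'def
      set ι : U →ₗ[𝒪'] V := U.subtype.restrictScalars 𝒪' with hιdef
      set MX𝔭 : Submodule 𝒪' V :=
        Submodule.span 𝒪' ((Submodule.span 𝒪 MXs : Submodule 𝒪 V) : Set V) with hMX𝔭def
      set T : Submodule 𝒪' W :=
        Submodule.span 𝒪' ((Submodule.span 𝒪 MYs : Submodule 𝒪 W) : Set W) with hTdef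
      set Z' : Submodule 𝒪' W := Submodule.span 𝒪' ((Z : Submodule 𝒪 W) : Set W) with hZ'def
      have h𝒪smulW : ∀ (S : Submodule 𝒪' W) (c : 𝒪) {w : W}, w ∈ S → c • w ∈ S := by
        intro S c w hw
        rw [← subalg_smul (S := 𝒪') c w]
        exact S.smul_mem _ hw
      have hMX𝔭U : ∀ {v : V}, v ∈ MX𝔭 → v ∈ U := by
        intro v hv
        induction hv using Submodule.span_induction with
        | mem x hx => exact hMXU hx
        | zero => exact U.zero_mem
        | add x y _ _ hx hy => exact U.add_mem hx hy
        | smul r x _ hx => rw [hsubV]; exact U.smul_mem _ hx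
      have h𝓜Y𝔭T : ∀ a ∈ 𝓜, ∀ {w : W}, w ∈ Y𝔭 → a • w ∈ T := by
        intro a ha w hw
        induction hw using Submodule.span_induction with
        | mem y hy =>
          exact Submodule.subset_span
            (Submodule.subset_span ((hMYmem _).2 ⟨a, ha, y, hy, rfl⟩))
        | zero => rw [smul_zero]; exact Submodule.zero_mem _
        | add x y _ _ hx hy => rw [smul_add]; exact Submodule.add_mem _ hx hy
        | smul r x _ hx =>
          rw [hsub, kSmul_comm, ← hsub]
          exact Submodule.smul_mem _ r hx
      have h𝓜X𝔭MX : ∀ a ∈ 𝓜, ∀ {v : V}, v ∈ X𝔭 → a • v ∈ MX𝔭 := by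
        intro a ha v hv
        induction hv using Submodule.span_induction with
        | mem x hx =>
          exact Submodule.subset_span
            (Submodule.subset_span ((hMXmem _).2 ⟨a, ha, x, hx, rfl⟩))
        | zero => rw [smul_zero]; exact Submodule.zero_mem _
        | add x y _ _ hx hy => rw [smul_add]; exact Submodule.add_mem _ hx hy
        | smul r x _ hx =>
          rw [hsubV, kSmul_comm, ← hsubV]
          exact Submodule.smul_mem _ r hx
      -- image and preimage computations
      have hcomapG_Y : Submodule.comap G' Y𝔭 = Submodule.comap ι X𝔭 := by
        apply le_antisymm
        · intro u hu
          have hGu : G u ∈ Y𝔭 := hu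
          obtain ⟨m, hm⟩ := hhbij.2 ⟨G u, hGu⟩
          have h1 : G ⟨(m : V), hX𝔭U m.2⟩ = G u := by
            rw [GextH (m : V) m.2]
            rw [show (⟨(m : V), m.2⟩ : X𝔭) = m from rfl, hm]
          have h2 := Ginj h1
          show (u : V) ∈ X𝔭
          rw [← h2]
          exact m.2
        · intro u hu
          have hu' : (u : V) ∈ X𝔭 := hu
          show G u ∈ Y𝔭
          rw [show G u = G ⟨(u : V), u.2⟩ from rfl, GextH (u : V) hu']
          exact (h ⟨(u : V), hu'⟩).2
      have hmapF_X : Submodule.map F' (Submodule.comap ι X𝔭) = Z' := by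
        apply le_antisymm
        · rintro w ⟨u, hu, rfl⟩
          have hu' : (u : V) ∈ X𝔭 := hu
          have key : ∀ (v : V) (hv : v ∈ X𝔭) (hvU : v ∈ U), F ⟨v, hvU⟩ ∈ Z' := by
            intro v hv
            induction hv using Submodule.span_induction with
            | mem x hx =>
              intro hvU
              rw [show (⟨x, hvU⟩ : U) = ⟨x, hXU hx⟩ from rfl, hθF x hx]
              exact Submodule.subset_span ⟨⟨x, hx⟩, rfl⟩
            | zero =>
              intro hvU
              rw [show (⟨(0 : V), hvU⟩ : U) = 0 from rfl, map_zero]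
              exact Submodule.zero_mem _
            | add x y hx hy ihx ihy =>
              intro hvU
              rw [show (⟨x + y, hvU⟩ : U) = ⟨x, hX𝔭U hx⟩ + ⟨y, hX𝔭U hy⟩ from rfl, map_add]
              exact Submodule.add_mem _ (ihx _) (ihy _)
            | smul r x hx ihx =>
              intro hvU
              rw [show (⟨r • x, hvU⟩ : U) = (r : K) • ⟨x, hX𝔭U hx⟩ from rfl, map_smul]
              exact Z'.smul_mem r (ihx _)
          show F u ∈ Z'
          rw [show F u = F ⟨(u : V), u.2⟩ from rfl]
          exact key _ hu' u.2
        · apply Submodule.span_le.2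
          rintro w ⟨xel, rfl⟩
          refine ⟨⟨(xel : V), hXU xel.2⟩, hXX𝔭 xel.2, ?_⟩
          show F ⟨(xel : V), hXU xel.2⟩ = θ xel
          rw [hθF (xel : V) xel.2]
      have hmapG_MX : Submodule.map G' (Submodule.comap ι MX𝔭) = T := by
        apply le_antisymm
        · rintro w ⟨u, hu, rfl⟩
          have hu' : (u : V) ∈ MX𝔭 := hu
          have key : ∀ (v : V) (hv : v ∈ MX𝔭) (hvU : v ∈ U), G ⟨v, hvU⟩ ∈ T := by
            intro v hv
            induction hv using Submodule.span_induction with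
            | mem m hm =>
              have inner : ∀ (m' : V) (hm' : m' ∈ Submodule.span 𝒪 MXs) (hm'U : m' ∈ U),
                  G ⟨m', hm'U⟩ ∈ T := by
                intro m' hm'
                induction hm' using Submodule.span_induction with
                | mem w' hw' =>
                  obtain ⟨a, ha, x, hx, rfl⟩ := (hMXmem w').1 hw'
                  intro hm'U
                  rw [show (⟨a • x, hm'U⟩ : U) = ⟨a • x, hUstab a (hXU hx)⟩ from rfl,
                    GeqA a x (hXU hx), GextH x (hXX𝔭 hx)]
                  exact h𝓜Y𝔭T a ha (h ⟨x, hXX𝔭 hx⟩).2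
                | zero =>
                  intro hm'U
                  rw [show (⟨(0 : V), hm'U⟩ : U) = 0 from rfl, map_zero]
                  exact Submodule.zero_mem _
                | add x y hx hy ihx ihy =>
                  intro hm'U
                  rw [show (⟨x + y, hm'U⟩ : U) = ⟨x, hMXU hx⟩ + ⟨y, hMXU hy⟩ from rfl,
                    map_add]
                  exact Submodule.add_mem _ (ihx _) (ihy _)
                | smul c x hx ihx =>
                  intro hm'U
                  have he : (⟨c • x, hm'U⟩ : U) = algebraMap 𝒪 K c • ⟨x, hMXU hx⟩ :=
                    Subtype.ext (algebraMap_smul K c x).symm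
                  rw [he, map_smul, algebraMap_smul K c]
                  exact h𝒪smulW T c (ihx _)
              exact inner m hm
            | zero =>
              intro hvU
              rw [show (⟨(0 : V), hvU⟩ : U) = 0 from rfl, map_zero]
              exact Submodule.zero_mem _
            | add x y hx hy ihx ihy =>
              intro hvU
              rw [show (⟨x + y, hvU⟩ : U) = ⟨x, hMX𝔭U hx⟩ + ⟨y, hMX𝔭U hy⟩ from rfl,
                map_add]
              exact Submodule.add_mem _ (ihx _) (ihy _)
            | smul r x hx ihx =>
              intro hvU
              rw [show (⟨r • x, hvU⟩ : U) = (r : K) • ⟨x, hMX𝔭U hx⟩ from rfl, map_smul]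
              exact T.smul_mem r (ihx _)
          show G u ∈ T
          rw [show G u = G ⟨(u : V), u.2⟩ from rfl]
          exact key _ hu' u.2
        · apply Submodule.span_le.2
          intro w hw
          induction hw using Submodule.span_induction with
          | mem w' hw' =>
            obtain ⟨a, ha, y, hy, rfl⟩ := (hMYmem w').1 hw'
            obtain ⟨m, hm⟩ := hhbij.2 ⟨y, hYY𝔭 hy⟩
            have hmU : (m : V) ∈ U := hX𝔭U m.2
            refine ⟨⟨a • (m : V), hUstab a hmU⟩, h𝓜X𝔭MX a ha m.2, ?_⟩
            show G ⟨a • (m : V), hUstab a hmU⟩ = a • y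
            rw [GeqA a (m : V) hmU, GextH (m : V) m.2]
            rw [show (⟨(m : V), m.2⟩ : X𝔭) = m from rfl, hm]
          | zero => exact Submodule.zero_mem _
          | add x y _ _ hx hy => exact Submodule.add_mem _ hx hy
          | smul c x _ hx => exact h𝒪smulW _ c hx
      have hcomapG_T : Submodule.comap G' T = Submodule.comap ι MX𝔭 := by
        apply le_antisymm
        · intro u hu
          have hGu : G u ∈ T := hu
          rw [← hmapG_MX] at hGu
          obtain ⟨u', hu', hGu'⟩ := hGu
          have h1 := Ginj hGu'
          show (u : V) ∈ MX𝔭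
          rw [← h1]
          exact hu'
        · exact Submodule.map_le_iff_le_comap.1 hmapG_MX.le
      have hmapF_MX : Submodule.map F' (Submodule.comap ι MX𝔭) = T := by
        apply le_antisymm
        · rintro w ⟨u, hu, rfl⟩
          have hu' : (u : V) ∈ MX𝔭 := hu
          have key : ∀ (v : V) (hv : v ∈ MX𝔭) (hvU : v ∈ U), F ⟨v, hvU⟩ ∈ T := by
            intro v hv
            induction hv using Submodule.span_induction with
            | mem m hm =>
              intro hvU
              rw [show (⟨m, hvU⟩ : U) = ⟨m, hMXU hm⟩ from rfl, FextF m hm]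
              exact Submodule.subset_span (f ⟨m, hm⟩).2
            | zero =>
              intro hvU
              rw [show (⟨(0 : V), hvU⟩ : U) = 0 from rfl, map_zero]
              exact Submodule.zero_mem _
            | add x y hx hy ihx ihy =>
              intro hvU
              rw [show (⟨x + y, hvU⟩ : U) = ⟨x, hMX𝔭U hx⟩ + ⟨y, hMX𝔭U hy⟩ from rfl,
                map_add]
              exact Submodule.add_mem _ (ihx _) (ihy _)
            | smul r x hx ihx =>
              intro hvU
              rw [show (⟨r • x, hvU⟩ : U) = (r : K) • ⟨x, hMX𝔭U hx⟩ from rfl, map_smul]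
              exact T.smul_mem r (ihx _)
          show F u ∈ T
          rw [show F u = F ⟨(u : V), u.2⟩ from rfl]
          exact key _ hu' u.2
        · apply Submodule.span_le.2
          intro my hmy
          obtain ⟨mx, hmx⟩ := hfb.2 ⟨my, hmy⟩
          refine ⟨⟨(mx : V), hMXU mx.2⟩, Submodule.subset_span mx.2, ?_⟩
          show F ⟨(mx : V), hMXU mx.2⟩ = my
          rw [FextF (mx : V) mx.2]
          rw [show (⟨(mx : V), mx.2⟩ : Submodule.span 𝒪 MXs) = mx from rfl, hmx]
      -- the operator P and the chain
      set P : Submodule 𝒪' W → Submodule 𝒪' W :=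
        fun S => Submodule.map F' (Submodule.comap G' S) with hPdef
      have hPmono : Monotone P := fun S S' hSS' =>
        Submodule.map_mono (Submodule.comap_mono hSS')
      have hPY : P Y𝔭 = Z' := by
        show Submodule.map F' (Submodule.comap G' Y𝔭) = Z'
        rw [hcomapG_Y, hmapF_X]
      have hPT : P T = T := by
        show Submodule.map F' (Submodule.comap G' T) = T
        rw [hcomapG_T, hmapF_MX]
      have hPinj : ∀ S S' : Submodule 𝒪' W, S ≤ T → S' ≤ T → P S = P S' → S = S' := by
        have haux : ∀ S S' : Submodule 𝒪' W, S ≤ T →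
            Submodule.comap G' S = Submodule.comap G' S' → S ≤ S' := by
          intro S S' hS hcc w hw
          have hwT : w ∈ T := hS hw
          rw [← hmapG_MX] at hwT
          obtain ⟨u, _, rfl⟩ := hwT
          have h1 : u ∈ Submodule.comap G' S := hw
          rw [hcc] at h1
          exact h1
        intro S S' hS hS' hPP
        have hFinj' : Function.Injective F' := Finj
        have h1 : Submodule.comap G' S = Submodule.comap G' S' :=
          Submodule.map_injective_of_injective hFinj' hPP
        exact le_antisymm (haux S S' hS h1) (haux S' S hS' h1.symm)
      set C : ℕ → Submodule 𝒪' W := fun n => P^[n] Y𝔭 with hCdef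
      have hC0 : C 0 = Y𝔭 := rfl
      have hCsucc : ∀ n, C (n + 1) = P (C n) := fun n => Function.iterate_succ_apply' P n Y𝔭
      have hYZ' : Y𝔭 ≤ Z' := Submodule.span_mono (fun w hw => hYZ hw)
      have hYT : Y𝔭 ≤ T := Submodule.span_mono (fun w hw => hYMY hw)
      have hCT : ∀ n, C n ≤ T := by
        intro n
        induction n with
        | zero => exact hYT
        | succ n ih =>
          rw [hCsucc]
          calc P (C n) ≤ P T := hPmono ih
            _ = T := hPT
      have hCmono : ∀ n, C n ≤ C (n + 1) := by
        intro n
        induction n with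
        | zero => rw [hCsucc 0, hC0, hPY]; exact hYZ'
        | succ n ih =>
          rw [hCsucc (n + 1)]
          calc C (n + 1) = P (C n) := hCsucc n
            _ ≤ P (C (n + 1)) := hPmono ih
      haveI : IsNoetherianRing 𝒪' := IsLocalization.isNoetherianRing 𝔭.primeCompl _ inferInstance
      have hTFG : T.FG := by
        obtain ⟨s, hs⟩ := h𝓜fg
        obtain ⟨t, ht⟩ := hYfg
        have hMYeq : Submodule.span 𝒪 MYs =
            Submodule.span 𝒪 (Set.image2 (· • ·) (s : Set A) (t : Set W)) := by
          apply le_antisymm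
          · apply Submodule.span_le.2
            intro w hw
            obtain ⟨a, ha, y, hy, rfl⟩ := (hMYmem w).1 hw
            have ha' : a ∈ Submodule.span 𝒪 (s : Set A) := by
              rw [hs]
              exact (Subalgebra.mem_toSubmodule 𝓜).2 ha
            have hy' : y ∈ Submodule.span 𝒪 (t : Set W) := by rw [ht]; exact hy
            clear hw hy ha
            induction ha' using Submodule.span_induction with
            | mem a₀ ha₀ =>
              induction hy' using Submodule.span_induction with
              | mem y₀ hy₀ => exact Submodule.subset_span (Set.mem_image2_of_mem ha₀ hy₀)
              | zero => rw [smul_zero]; exact Submodule.zero_mem _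
              | add y₁ y₂ _ _ h1 h2 => rw [smul_add]; exact Submodule.add_mem _ h1 h2
              | smul cc yy _ hyy => rw [rSmul_comm K]; exact Submodule.smul_mem _ cc hyy
            | zero => rw [zero_smul]; exact Submodule.zero_mem _
            | add a₁ a₂ _ _ h1 h2 => rw [add_smul]; exact Submodule.add_mem _ h1 h2
            | smul cc aa _ haa => rw [rSmul_assoc K]; exact Submodule.smul_mem _ cc haa
          · apply Submodule.span_le.2
            rintro w ⟨a₀, ha₀, y₀, hy₀, rfl⟩
            have haM : a₀ ∈ 𝓜 := by
              rw [← Subalgebra.mem_toSubmodule 𝓜, ← hs]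
              exact Submodule.subset_span ha₀
            have hyY : y₀ ∈ Y := ht ▸ Submodule.subset_span hy₀
            exact Submodule.subset_span ((hMYmem _).2 ⟨a₀, haM, y₀, hyY, rfl⟩)
        rw [hTdef, hMYeq, Submodule.span_span_of_tower]
        exact Submodule.fg_span (Set.Finite.image2 _ s.finite_toSet t.finite_toSet)
      haveI hTnoe : IsNoetherian 𝒪' T := isNoetherian_of_fg_of_noetherian T hTFG
      have hstab : ∃ n, C n = C (n + 1) := by
        set ch : ℕ →o Submodule 𝒪' T :=
          ⟨fun n => Submodule.comap T.subtype (C n),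
            monotone_nat_of_le_succ (fun n => Submodule.comap_mono (hCmono n))⟩ with hchdef
        obtain ⟨n, hn⟩ := monotone_stabilizes_iff_noetherian.2 hTnoe ch
        refine ⟨n, ?_⟩
        have h1 : ch n = ch (n + 1) := hn (n + 1) (Nat.le_succ n)
        have h2 : Submodule.map T.subtype (Submodule.comap T.subtype (C n)) =
            Submodule.map T.subtype (Submodule.comap T.subtype (C (n + 1))) :=
          congrArg (Submodule.map T.subtype) h1
        rwa [Submodule.map_comap_subtype, Submodule.map_comap_subtype,
          inf_of_le_right (hCT n), inf_of_le_right (hCT (n + 1))] at h2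
      obtain ⟨n, hn⟩ := hstab
      have hdesc : ∀ m, C m = C (m + 1) → Y𝔭 = Z' := by
        intro m
        induction m with
        | zero =>
          intro h0
          rw [hCsucc 0, hC0, hPY] at h0
          exact h0
        | succ m ih =>
          intro h1
          apply ih
          rw [hCsucc (m + 1)] at h1
          nth_rewrite 1 [hCsucc m] at h1
          exact hPinj _ _ (hCT m) (hCT (m + 1)) h1
      have hYZeq : Y𝔭 = Z' := hdesc n hn
      have hzZ' : z ∈ Z' := Submodule.subset_span hz
      rw [← hYZeq] at hzZ'
      exact hzZ'
    refine ⟨θ.codRestrict Y (fun x => hZY ⟨x, rfl⟩), ⟨?_, ?_⟩, ?_, ?_⟩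
    · intro x x' hxx'
      have h1 : θ x = θ x' := by
        have h0 := Subtype.ext_iff.1 hxx'
        rwa [LinearMap.codRestrict_apply, LinearMap.codRestrict_apply] at h0
      have h2 : f (Submodule.inclusion hXMX x) = f (Submodule.inclusion hXMX x') :=
        Subtype.coe_injective h1
      have h3 := hfb.1 h2
      exact Submodule.inclusion_injective hXMX h3
    · intro y
      obtain ⟨x, hx⟩ : (y : W) ∈ LinearMap.range θ := hYZ y.2
      refine ⟨x, Subtype.ext ?_⟩
      rw [LinearMap.codRestrict_apply]
      exact hx
    · intro a ha v hv hav
      show (θ ⟨a • v, hav⟩ : W) = a • (θ ⟨v, hv⟩ : W)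
      rw [hθ, hθ]
      exact hfe a (hΛ𝓜 ha) v (hXMX hv) (hXMX hav)
    · intro x hx hx'
      show (θ ⟨x, hx⟩ : W) = _
      rw [hθ]


/-- Let `X` and `Y` be locally isomorphic `Λ`-lattices and let
`f : 𝓜X → 𝓜Y` be an isomorphism of `𝓜`-lattices.  Then `f` restricts to an isomorphism
`f|_X : X → Y` of `Λ`-lattices if and only if `Y ⊆ f(X)`. -/
theorem stmt_4
    (𝒪 : Type*) [CommRing 𝒪] [IsDomain 𝒪] [IsDedekindDomain 𝒪]
    (K : Type*) [Field K] [Algebra 𝒪 K] [IsFractionRing 𝒪 K]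
    (hOK : ¬ Function.Surjective (algebraMap 𝒪 K))
    (A : Type*) [Ring A] [Algebra K A] [Algebra 𝒪 A] [IsScalarTower 𝒪 K A]
    [FiniteDimensional K A] [IsSemisimpleRing A] [Algebra.IsSeparable K A]
    (Λ 𝓜 : Subalgebra 𝒪 A) (hΛ : IsOrder 𝒪 K A Λ)
    (h𝓜 : IsMaximalOrder 𝒪 K A 𝓜) (hΛ𝓜 : Λ ≤ 𝓜)
    (V : Type*) [AddCommGroup V] [Module K V] [Module 𝒪 V] [IsScalarTower 𝒪 K V]
    [Module A V] [IsScalarTower K A V]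
    (W : Type*) [AddCommGroup W] [Module K W] [Module 𝒪 W] [IsScalarTower 𝒪 K W]
    [Module A W] [IsScalarTower K A W]
    (X : Submodule 𝒪 V) (hXfg : X.FG) (hXst : SetStable (Λ : Set A) X)
    (Y : Submodule 𝒪 W) (hYfg : Y.FG) (hYst : SetStable (Λ : Set A) Y)
    (hloc : LocallyIsomorphic 𝒪 K A Λ X Y)
    (f : (Submodule.span 𝒪 {v : V | ∃ a ∈ 𝓜, ∃ x ∈ X, v = a • x}) →ₗ[𝒪]
      (Submodule.span 𝒪 {w : W | ∃ a ∈ 𝓜, ∃ y ∈ Y, w = a • y}))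
    (hfb : Function.Bijective f)
    (hfe : IsEquivMap (𝓜 : Set A)
      (Submodule.span 𝒪 {v : V | ∃ a ∈ 𝓜, ∃ x ∈ X, v = a • x})
      (Submodule.span 𝒪 {w : W | ∃ a ∈ 𝓜, ∃ y ∈ Y, w = a • y}) f) :
    -- `f` restricts to an isomorphism of `Λ`-lattices `X → Y`
    (∃ g : X →ₗ[𝒪] Y, Function.Bijective g ∧ IsEquivMap (Λ : Set A) X Y g ∧
      ∀ (x : V) (hx : x ∈ X)
        (hx' : x ∈ Submodule.span 𝒪 {v : V | ∃ a ∈ 𝓜, ∃ x ∈ X, v = a • x}),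
        ((g ⟨x, hx⟩ : Y) : W) = ((f ⟨x, hx'⟩ :
          Submodule.span 𝒪 {w : W | ∃ a ∈ 𝓜, ∃ y ∈ Y, w = a • y}) : W))
    ↔
    -- `Y ⊆ f(X)`
    (∀ y : W, y ∈ Y →
      ∃ (x : V) (hx' : x ∈ Submodule.span 𝒪 {v : V | ∃ a ∈ 𝓜, ∃ x ∈ X, v = a • x}),
        x ∈ X ∧ ((f ⟨x, hx'⟩ :
          Submodule.span 𝒪 {w : W | ∃ a ∈ 𝓜, ∃ y ∈ Y, w = a • y}) : W) = y) := by
  exact stmt4_aux 𝒪 K A Λ 𝓜 hΛ h𝓜.1.2 h𝓜.1.1 hΛ𝓜 V W X hXst Y hYfg hYst hloc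
    _ rfl _ rfl f hfb hfe
end

section
/- Two Λ-lattices X and Y are isomorphic if and only if (a) the End_Λ(Y)-module Hom_Λ(X, Y) (with End_Λ(Y) acting by post-composition) is free of rank 1, and (b) every free generator of Hom_Λ(X, Y) over End_Λ(Y) is an isomorphism X → Y. -/
open Submodule Function

section Aux

variable {A V W U R₀ : Type*} [Semiring R₀] [AddCommMonoid V] [AddCommMonoid W] [AddCommMonoid U]
  [Module R₀ V] [Module R₀ W] [Module R₀ U] [SMul A V] [SMul A W] [SMul A U]
  {S : Set A} {X : Submodule R₀ V} {Y : Submodule R₀ W} {Z : Submodule R₀ U}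

lemma isEquiv_comp {φ : X →ₗ[R₀] Y} {h : Y →ₗ[R₀] Z}
    (hφ : IsEquivMap S X Y φ) (hh : IsEquivMap S Y Z h) :
    IsEquivMap S X Z (h ∘ₗ φ) := by
  intro a ha v hv hav
  have h1 := hφ a ha v hv hav
  have hmem : a • ((φ ⟨v, hv⟩ : Y) : W) ∈ Y := h1 ▸ (φ ⟨a • v, hav⟩).2
  have h2 := hh a ha ((φ ⟨v, hv⟩ : Y) : W) (φ ⟨v, hv⟩).2 hmem
  have h3 : φ ⟨a • v, hav⟩ = ⟨a • ((φ ⟨v, hv⟩ : Y) : W), hmem⟩ := Subtype.ext h1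
  simp only [LinearMap.comp_apply, h3]
  exact h2

lemma isEquiv_id : IsEquivMap S Y Y LinearMap.id := fun _ _ _ _ _ => rfl

lemma isEquiv_symm (hXst : SetStable S X) {φ : X →ₗ[R₀] Y} (hb : Function.Bijective φ)
    (hφ : IsEquivMap S X Y φ) :
    IsEquivMap S Y X (LinearEquiv.ofBijective φ hb).symm.toLinearMap := by
  intro a ha w hw haw
  set e := LinearEquiv.ofBijective φ hb with he
  set v := e.symm ⟨w, hw⟩ with hv
  have hav : a • (v : V) ∈ X := hXst a ha (v : V) v.2
  have h1 := hφ a ha (v : V) v.2 hav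
  have hφv : φ v = ⟨w, hw⟩ := e.apply_symm_apply ⟨w, hw⟩
  have h3 : φ ⟨a • (v : V), hav⟩ = ⟨a • w, haw⟩ := Subtype.ext (by rw [h1, hφv])
  have h2 : e.symm ⟨a • w, haw⟩ = ⟨a • (v : V), hav⟩ := by
    rw [← h3]; exact e.symm_apply_apply _
  show ((e.symm ⟨a • w, haw⟩ : X) : V) = a • ((e.symm ⟨w, hw⟩ : X) : V)
  rw [h2, ← hv]

end Aux

/-- Two `Λ`-lattices `X` and `Y` are isomorphic if and only if
(a) `Hom_Λ(X, Y)` is free of rank `1` over `End_Λ(Y)` (acting by post-composition), and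
(b) every free generator of `Hom_Λ(X, Y)` over `End_Λ(Y)` is an isomorphism `X → Y`. -/
theorem stmt_7
    (𝒪 : Type*) [CommRing 𝒪] [IsDomain 𝒪] [IsDedekindDomain 𝒪]
    (K : Type*) [Field K] [Algebra 𝒪 K] [IsFractionRing 𝒪 K]
    (hOK : ¬ Function.Surjective (algebraMap 𝒪 K))
    (A : Type*) [Ring A] [Algebra K A] [Algebra 𝒪 A] [IsScalarTower 𝒪 K A]
    [FiniteDimensional K A] [IsSemisimpleRing A] [Algebra.IsSeparable K A]
    (Λ : Subalgebra 𝒪 A) (hΛ : IsOrder 𝒪 K A Λ)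
    (V : Type*) [AddCommGroup V] [Module K V] [Module 𝒪 V] [IsScalarTower 𝒪 K V]
    [Module A V] [IsScalarTower K A V]
    (W : Type*) [AddCommGroup W] [Module K W] [Module 𝒪 W] [IsScalarTower 𝒪 K W]
    [Module A W] [IsScalarTower K A W]
    (X : Submodule 𝒪 V) (hXfg : X.FG) (hXst : SetStable (Λ : Set A) X)
    (Y : Submodule 𝒪 W) (hYfg : Y.FG) (hYst : SetStable (Λ : Set A) Y) :
    ExistsLatIso (Λ : Set A) X Y ↔
      -- (a) `Hom_Λ(X,Y)` is free of rank one over `End_Λ(Y)`: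
      ((∃ φ : X →ₗ[𝒪] Y, IsEquivMap (Λ : Set A) X Y φ ∧
          (∀ ψ : X →ₗ[𝒪] Y, IsEquivMap (Λ : Set A) X Y ψ →
            ∃! h : Y →ₗ[𝒪] Y, IsEquivMap (Λ : Set A) Y Y h ∧ ψ = h ∘ₗ φ)) ∧
      -- (b) every free generator of `Hom_Λ(X,Y)` over `End_Λ(Y)` is an isomorphism:
        (∀ φ : X →ₗ[𝒪] Y, IsEquivMap (Λ : Set A) X Y φ →
          (∀ ψ : X →ₗ[𝒪] Y, IsEquivMap (Λ : Set A) X Y ψ →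
            ∃! h : Y →ₗ[𝒪] Y, IsEquivMap (Λ : Set A) Y Y h ∧ ψ = h ∘ₗ φ) →
          Function.Bijective φ)) := by
  constructor
  · rintro ⟨f, hf, hfe⟩
    set e := LinearEquiv.ofBijective f hf with he
    have hsymm : IsEquivMap (Λ : Set A) Y X e.symm.toLinearMap := isEquiv_symm hXst hf hfe
    have hsf : ∀ x : X, e.symm (f x) = x := fun x => e.symm_apply_apply x
    constructor
    · refine ⟨f, hfe, ?_⟩
      intro ψ hψ
      refine ⟨ψ ∘ₗ e.symm.toLinearMap, ⟨isEquiv_comp hsymm hψ, ?_⟩, ?_⟩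
      · ext x
        simp only [LinearMap.comp_apply, LinearEquiv.coe_coe, hsf]
      · rintro h ⟨-, hh⟩
        apply LinearMap.ext; intro y
        obtain ⟨x, hx⟩ := hf.2 y
        calc h y = h (f x) := by rw [hx]
          _ = ψ x := by rw [hh]; rfl
          _ = (ψ ∘ₗ e.symm.toLinearMap) y := by
              simp only [LinearMap.comp_apply, LinearEquiv.coe_coe, ← hx, hsf]
    · intro φ hφ hgen
      obtain ⟨h, ⟨hhe, hfac⟩, -⟩ := hgen f hfe
      set h' : Y →ₗ[𝒪] Y := φ ∘ₗ e.symm.toLinearMap with hh'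
      have hh'e : IsEquivMap (Λ : Set A) Y Y h' := isEquiv_comp hsymm hφ
      have hh'f : h' ∘ₗ f = φ := by
        apply LinearMap.ext; intro x
        simp only [hh', LinearMap.comp_apply, LinearEquiv.coe_coe, hsf]
      have hid : h ∘ₗ h' = LinearMap.id := by
        apply LinearMap.ext; intro y
        obtain ⟨x, hx⟩ := hf.2 y
        calc (h ∘ₗ h') y = h (h' (f x)) := by rw [← hx]; rfl
          _ = h (φ x) := by rw [← LinearMap.comp_apply h' f, hh'f]
          _ = f x := by rw [hfac]; rfl
          _ = LinearMap.id y := by rw [hx]; rfl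
      obtain ⟨g, hg, hgu⟩ := hgen φ hφ
      have h1 : h' ∘ₗ h = g := by
        apply hgu
        refine ⟨isEquiv_comp hhe hh'e, ?_⟩
        rw [LinearMap.comp_assoc, ← hfac, hh'f]
      have h2 : LinearMap.id = g := hgu _ ⟨isEquiv_id, by simp⟩
      have hid2 : h' ∘ₗ h = LinearMap.id := h1.trans h2.symm
      have hbij' : Function.Bijective h' := by
        rw [Function.bijective_iff_has_inverse]
        refine ⟨h, fun y => ?_, fun y => ?_⟩
        · have := LinearMap.ext_iff.mp hid y; simpa using this
        · have := LinearMap.ext_iff.mp hid2 y; simpa using this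
      have : φ = h' ∘ₗ f := hh'f.symm
      rw [this]
      exact hbij'.comp hf
  · rintro ⟨⟨φ, hφ, hgenφ⟩, hb⟩
    exact ⟨φ, hb φ hφ hgenφ, hφ⟩
end

section
/- Let Λ be an 𝒪-order in a finite-dimensional semisimple K-algebra A over a number field K, let 𝔭 be a maximal ideal of 𝒪, and let X, Y be Λ-lattices of equal 𝒪-rank n with pseudo-bases whose coefficient ideals have zero 𝔭-adic valuation; identify Hom_K(KX, KY) with Mat_{n×n}(K) via these bases. Let B_1, …, B_r ∈ Mat_{n×n}(𝒪_𝔭) be an 𝒪_𝔭-basis of Hom_{Λ_𝔭}(X_𝔭, Y_𝔭) and let B̄_i ∈ Mat_{n×n}(𝒪/𝔭) denote the reduction of B_i modulo 𝔭. Then X_𝔭 and Y_𝔭 are isomorphic as Λ_𝔭-modules if and only if there exists a tuple (b_1, …, b_r) ∈ (𝒪/𝔭)^r with det_{𝒪/𝔭}(b_1B̄_1 + ⋯ + b_rB̄_r) ≠ 0; moreover, if (b_1, …, b_r) is such a tuple and c_1, …, c_r ∈ 𝒪_𝔭 reduce to b_1, …, b_r modulo 𝔭, then c_1B_1 + ⋯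 + c_rB_r is an isomorphism X_𝔭 → Y_𝔭. -/
open Submodule Function

set_option synthInstance.maxHeartbeats 1000000
set_option maxHeartbeats 1000000

/-- `c ∈ K` reduces to `d ∈ 𝒪/𝔭` modulo `𝔭` (writing `c = u/s` with `s ∉ 𝔭`). -/
def ReducesTo {𝒪 K : Type*} [CommRing 𝒪] [Field K] [Algebra 𝒪 K]
    (𝔭 : Ideal 𝒪) (c : K) (d : 𝒪 ⧸ 𝔭) : Prop :=
  ∃ u s : 𝒪, s ∉ 𝔭 ∧ c * algebraMap 𝒪 K s = algebraMap 𝒪 K u ∧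
    Ideal.Quotient.mk 𝔭 u = d * Ideal.Quotient.mk 𝔭 s

/-! ### Auxiliary lemmas -/

section AuxLoc

variable {𝒪 K : Type*} [CommRing 𝒪] [IsDomain 𝒪] [Field K]
    [Algebra 𝒪 K] [IsFractionRing 𝒪 K] (𝔭 : Ideal 𝒪)

instance locIsLoc (h : 𝔭.IsPrime) : IsLocalization 𝔭.primeCompl (localizationAt 𝒪 K 𝔭 h) := by
  unfold localizationAt; infer_instance

variable (h𝔭 : 𝔭.IsMaximal)

/-- Reduction modulo `𝔭` as a ring homomorphism on the localization. -/
noncomputable def rho : localizationAt 𝒪 K 𝔭 h𝔭.isPrime →+* 𝒪 ⧸ 𝔭 :=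
  letI : Field (𝒪 ⧸ 𝔭) := Ideal.Quotient.field 𝔭
  IsLocalization.lift (M := 𝔭.primeCompl) (S := localizationAt 𝒪 K 𝔭 h𝔭.isPrime)
    (g := Ideal.Quotient.mk 𝔭)
    (fun s => isUnit_iff_ne_zero.2 (fun h => s.2 (Ideal.Quotient.eq_zero_iff_mem.1 h)))

lemma rho_algebraMap (u : 𝒪) :
    rho 𝔭 h𝔭 (algebraMap 𝒪 (localizationAt 𝒪 K 𝔭 h𝔭.isPrime) u) = Ideal.Quotient.mk 𝔭 u := by
  letI : Field (𝒪 ⧸ 𝔭) := Ideal.Quotient.field 𝔭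
  exact IsLocalization.lift_eq _ u

lemma exists_rep (c : localizationAt 𝒪 K 𝔭 h𝔭.isPrime) :
    ∃ u s : 𝒪, s ∉ 𝔭 ∧ (c : K) * algebraMap 𝒪 K s = algebraMap 𝒪 K u ∧
      c * algebraMap 𝒪 (localizationAt 𝒪 K 𝔭 h𝔭.isPrime) s =
        algebraMap 𝒪 (localizationAt 𝒪 K 𝔭 h𝔭.isPrime) u := by
  obtain ⟨⟨u, s⟩, h⟩ := IsLocalization.surj (M := 𝔭.primeCompl) c
  refine ⟨u, s, s.2, ?_, h⟩
  have := congrArg (Subalgebra.val _) h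
  simpa using this

lemma reducesTo_rho (c : localizationAt 𝒪 K 𝔭 h𝔭.isPrime) :
    ReducesTo 𝔭 (c : K) (rho 𝔭 h𝔭 c) := by
  obtain ⟨u, s, hs, h1, h2⟩ := exists_rep 𝔭 h𝔭 c
  refine ⟨u, s, hs, h1, ?_⟩
  have := congrArg (rho 𝔭 h𝔭) h2
  rw [map_mul, rho_algebraMap, rho_algebraMap] at this
  exact this.symm

lemma reducesTo_unique (h𝔭 : 𝔭.IsMaximal) {c : K} {d d' : 𝒪 ⧸ 𝔭} (h1 : ReducesTo 𝔭 c d)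
    (h2 : ReducesTo 𝔭 c d') : d = d' := by
  obtain ⟨u, s, hs, he, hm⟩ := h1
  obtain ⟨u', s', hs', he', hm'⟩ := h2
  have hK : algebraMap 𝒪 K (u * s') = algebraMap 𝒪 K (u' * s) := by
    rw [map_mul, map_mul, ← he, ← he']; ring
  have h𝒪 : u * s' = u' * s := IsFractionRing.injective 𝒪 K hK
  have hq := congrArg (Ideal.Quotient.mk 𝔭) h𝒪
  rw [map_mul, map_mul, hm, hm'] at hq
  haveI := h𝔭
  letI : Field (𝒪 ⧸ 𝔭) := Ideal.Quotient.field 𝔭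
  have hsne : Ideal.Quotient.mk 𝔭 s ≠ 0 := fun h => hs (Ideal.Quotient.eq_zero_iff_mem.1 h)
  have hsne' : Ideal.Quotient.mk 𝔭 s' ≠ 0 := fun h => hs' (Ideal.Quotient.eq_zero_iff_mem.1 h)
  have h3 : (d - d') * (Ideal.Quotient.mk 𝔭 s * Ideal.Quotient.mk 𝔭 s') = 0 := by
    linear_combination hq
  rcases mul_eq_zero.1 h3 with h4 | h4
  · exact sub_eq_zero.1 h4
  · exact absurd h4 (mul_ne_zero hsne hsne')

lemma mem_loc_of (h : 𝔭.IsPrime) {x : K} {a s : 𝒪} (hs : s ∉ 𝔭)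
    (hx : x * algebraMap 𝒪 K s = algebraMap 𝒪 K a) : x ∈ localizationAt 𝒪 K 𝔭 h := by
  have hsne : algebraMap 𝒪 K s ≠ 0 := by
    intro h0
    exact hs (by simpa using (IsFractionRing.injective 𝒪 K (h0.trans (map_zero _).symm)) ▸
      (show (0:𝒪) ∈ 𝔭 from 𝔭.zero_mem))
  refine ⟨a, s, hs, ?_⟩
  rw [IsFractionRing.mk'_eq_div]
  field_simp [← hx]
  exact hx

lemma isUnit_of_rho_ne_zero {c : localizationAt 𝒪 K 𝔭 h𝔭.isPrime}
    (h : rho 𝔭 h𝔭 c ≠ 0) : IsUnit c := by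
  obtain ⟨u, s, hs, h1, h2⟩ := exists_rep 𝔭 h𝔭 c
  letI : Field (𝒪 ⧸ 𝔭) := Ideal.Quotient.field 𝔭
  have hu : u ∉ 𝔭 := by
    intro hu
    apply h
    have h3 := congrArg (rho 𝔭 h𝔭) h2
    rw [map_mul, rho_algebraMap, rho_algebraMap, Ideal.Quotient.eq_zero_iff_mem.2 hu] at h3
    have hsne : Ideal.Quotient.mk 𝔭 s ≠ 0 := fun h => hs (Ideal.Quotient.eq_zero_iff_mem.1 h)
    exact (mul_eq_zero.1 h3).resolve_right hsne
  have hune : algebraMap 𝒪 K u ≠ 0 := by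
    intro h0
    have : u = 0 := IsFractionRing.injective 𝒪 K (by simpa using h0)
    exact hu (this ▸ 𝔭.zero_mem)
  have hcne : (c : K) ≠ 0 := by
    intro h0
    rw [h0, zero_mul] at h1
    exact hune h1.symm
  have hinv : (c : K)⁻¹ * algebraMap 𝒪 K u = algebraMap 𝒪 K s := by
    rw [← h1]; field_simp
  have hmem : (c : K)⁻¹ ∈ localizationAt 𝒪 K 𝔭 h𝔭.isPrime :=
    mem_loc_of 𝔭 h𝔭.isPrime hu hinv
  refine isUnit_iff_exists_inv.2 ⟨⟨(c : K)⁻¹, hmem⟩, ?_⟩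
  ext
  simp [mul_inv_cancel₀ hcne]

end AuxLoc

section AuxSpan

variable {𝒪 K : Type*} [CommRing 𝒪] [Field K] [Algebra 𝒪 K]
  (R : Subalgebra 𝒪 K)
  {V : Type*} [AddCommGroup V] [Module K V]
  {W : Type*} [AddCommGroup W] [Module K W]

lemma span_loc_eq [Module 𝒪 V] [IsScalarTower 𝒪 K V]
    {n : ℕ} (bα : Fin n → V) (𝔞 : Fin n → Submodule 𝒪 K)
    (hval : ∀ i, span R ((𝔞 i : Set K)) = span R {(1 : K)})
    (X : Submodule 𝒪 V)
    (hXdec : X = ⨆ i : Fin n, Submodule.map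
      ((LinearMap.toSpanSingleton K V (bα i)).restrictScalars 𝒪) (𝔞 i)) :
    span R (X : Set V) = span R (Set.range bα) := by
  have key : ∀ i, span R ((Submodule.map
      ((LinearMap.toSpanSingleton K V (bα i)).restrictScalars 𝒪) (𝔞 i) : Set V)) =
      span R {bα i} := by
    intro i
    have h1 : (Submodule.map ((LinearMap.toSpanSingleton K V (bα i)).restrictScalars 𝒪)
        (𝔞 i) : Set V) =
        ⇑((LinearMap.toSpanSingleton K V (bα i)).restrictScalars R) '' (𝔞 i : Set K) := rfl
    rw [h1, ← Submodule.map_span, hval i, Submodule.map_span]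
    congr 1
    simp [LinearMap.toSpanSingleton_apply]
  apply le_antisymm
  · rw [span_le]
    intro x hx
    rw [hXdec] at hx
    refine Submodule.iSup_induction _ (motive := fun x => x ∈ span R (Set.range bα)) hx ?_ ?_ ?_
    · intro i x hxi
      have : x ∈ span R {bα i} := (key i) ▸ subset_span hxi
      exact span_mono (Set.singleton_subset_iff.2 (Set.mem_range_self i)) this
    · exact zero_mem _
    · intro x y hx hy
      exact Submodule.add_mem (span R (Set.range bα)) hx hy
  · rw [span_le]
    rintro x ⟨i, rfl⟩
    have : bα i ∈ span R {bα i} := mem_span_singleton_self _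
    rw [← key i] at this
    refine span_mono ?_ this
    intro y hy
    rw [hXdec]
    exact Set.mem_of_subset_of_mem (SetLike.coe_subset_coe.2 (le_iSup
      (fun i => Submodule.map ((LinearMap.toSpanSingleton K V (bα i)).restrictScalars 𝒪) (𝔞 i))
      i)) hy

lemma mem_span_range_basis {n : ℕ} (b : Module.Basis (Fin n) K V) (x : V) :
    x ∈ span R (Set.range b) ↔ ∀ i, b.repr x i ∈ R := by
  constructor
  · intro hx
    refine span_induction ?_ ?_ ?_ ?_ hx
    · rintro y ⟨j, rfl⟩ i
      rw [b.repr_self]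
      by_cases h : j = i
      · subst h; simp only [Finsupp.single_eq_same]; exact one_mem R
      · rw [Finsupp.single_eq_of_ne (Ne.symm h)]; exact zero_mem R
    · intro i; simp only [map_zero, Finsupp.coe_zero, Pi.zero_apply]; exact zero_mem R
    · intro y z _ _ hy hz i
      rw [map_add, Finsupp.add_apply]
      exact add_mem (hy i) (hz i)
    · intro r y _ hy i
      have : r • y = (r : K) • y := rfl
      rw [this, map_smul, Finsupp.smul_apply, smul_eq_mul]
      exact mul_mem r.2 (hy i)
  · intro h
    have hx : x = ∑ i, (⟨b.repr x i, h i⟩ : R) • b i := by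
      conv_lhs => rw [← b.sum_repr x]
      exact Finset.sum_congr rfl fun i _ => rfl
    rw [hx]
    exact sum_mem fun i _ => smul_mem _ _ (subset_span (Set.mem_range_self i))

lemma matrix_mapsTo {n : ℕ} (bα : Module.Basis (Fin n) K V) (bβ : Module.Basis (Fin n) K W)
    (f : V →ₗ[K] W) (hf : ∀ i j, LinearMap.toMatrix bα bβ f i j ∈ R) :
    Set.MapsTo ⇑f (span R (Set.range bα) : Set V) (span R (Set.range bβ) : Set W) := by
  intro x hx
  rw [SetLike.mem_coe, mem_span_range_basis R bβ]
  intro i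
  have hrep : bβ.repr (f x) i = ∑ j, LinearMap.toMatrix bα bβ f i j * bα.repr x j := by
    rw [← LinearMap.toMatrix_mulVec_repr bα bβ f x]
    rfl
  rw [hrep]
  exact sum_mem fun j _ => mul_mem (hf i j)
    ((mem_span_range_basis R bα x).1 hx j)

lemma matrix_bijOn {n : ℕ} (bα : Module.Basis (Fin n) K V) (bβ : Module.Basis (Fin n) K W)
    (f : V →ₗ[K] W) (g : W →ₗ[K] V)
    (hf : ∀ i j, LinearMap.toMatrix bα bβ f i j ∈ R)
    (hg : ∀ i j, LinearMap.toMatrix bβ bα g i j ∈ R)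
    (hgf : (LinearMap.toMatrix bβ bα g) * (LinearMap.toMatrix bα bβ f) = 1)
    (hfg : (LinearMap.toMatrix bα bβ f) * (LinearMap.toMatrix bβ bα g) = 1) :
    Set.BijOn ⇑f (span R (Set.range bα) : Set V) (span R (Set.range bβ) : Set W) := by
  have hgfid : g.comp f = LinearMap.id := by
    apply (LinearMap.toMatrix bα bα).injective
    rw [LinearMap.toMatrix_comp bα bβ bα, hgf, LinearMap.toMatrix_id]
  have hfgid : f.comp g = LinearMap.id := by
    apply (LinearMap.toMatrix bβ bβ).injective
    rw [LinearMap.toMatrix_comp bβ bα bβ, hfg, LinearMap.toMatrix_id]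
  refine ⟨matrix_mapsTo R bα bβ f hf, ?_, ?_⟩
  · intro x _ y _ hxy
    have := congrArg g hxy
    calc x = g (f x) := by rw [← LinearMap.comp_apply, hgfid]; rfl
    _ = g (f y) := this
    _ = y := by rw [← LinearMap.comp_apply, hgfid]; rfl
  · intro y hy
    refine ⟨g y, matrix_mapsTo R bβ bα g hg hy, ?_⟩
    rw [← LinearMap.comp_apply, hfgid]; rfl

end AuxSpan

section AuxAlg

variable {K : Type*} [Field K]

lemma algSMulComm {A V : Type*} [Ring A] [Algebra K A] [AddCommGroup V] [Module K V]
    [Module A V] [IsScalarTower K A V] (a : A) (k : K) (v : V) :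
    a • (k • v) = k • (a • v) := by
  rw [← algebraMap_smul A k v, ← mul_smul, ← Algebra.commutes k a, mul_smul, algebraMap_smul]

/-- The `K`-linear map `v ↦ a • v`. -/
def aSMul {A V : Type*} [Ring A] [Algebra K A] [AddCommGroup V] [Module K V]
    [Module A V] [IsScalarTower K A V] (a : A) : V →ₗ[K] V where
  toFun v := a • v
  map_add' v w := smul_add a v w
  map_smul' k v := algSMulComm a k v

/-- The `K`-linear map `a ↦ a • v`. -/
def vSMul {A V : Type*} [Ring A] [Algebra K A] [AddCommGroup V] [Module K V]
    [Module A V] [IsScalarTower K A V] (v : V) : A →ₗ[K] V where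
  toFun a := a • v
  map_add' a b := add_smul a b v
  map_smul' k a := smul_assoc k a v

end AuxAlg

set_option maxHeartbeats 4000000

/-- Let `B_1, …, B_r ∈ Mat_{n×n}(𝒪_𝔭)` be an `𝒪_𝔭`-basis of
`Hom_{Λ_𝔭}(X_𝔭, Y_𝔭)` and `B̄_i` their reductions mod `𝔭`.  Then `X_𝔭 ≅ Y_𝔭` as
`Λ_𝔭`-modules iff `det(b_1B̄_1 + ⋯ + b_rB̄_r) ≠ 0` for some `(b_i) ∈ (𝒪/𝔭)^r`; and if
`c_1, …, c_r ∈ 𝒪_𝔭` reduce to such `b_1, …, b_r`, then `c_1B_1 + ⋯ + c_rB_r` is an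
isomorphism `X_𝔭 → Y_𝔭`. -/
theorem stmt_17
    (K : Type*) [Field K] [NumberField K]
    (A : Type*) [Ring A] [Algebra K A] [FiniteDimensional K A] [IsSemisimpleRing A]
    [Algebra (NumberField.RingOfIntegers K) A] [IsScalarTower (NumberField.RingOfIntegers K) K A]
    (Λ : Subalgebra (NumberField.RingOfIntegers K) A)
    (hΛ : IsOrder (NumberField.RingOfIntegers K) K A Λ)
    (V : Type*) [AddCommGroup V] [Module K V] [Module A V] [IsScalarTower K A V]
    [Module (NumberField.RingOfIntegers K) V] [IsScalarTower (NumberField.RingOfIntegers K) K V]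
    (W : Type*) [AddCommGroup W] [Module K W] [Module A W] [IsScalarTower K A W]
    [Module (NumberField.RingOfIntegers K) W] [IsScalarTower (NumberField.RingOfIntegers K) K W]
    (𝔭 : Ideal (NumberField.RingOfIntegers K)) (h𝔭 : 𝔭.IsMaximal)
    (n : ℕ) (bα : Module.Basis (Fin n) K V) (bβ : Module.Basis (Fin n) K W)
    -- the coefficient ideals: fractional ideals of `K` with `v_𝔭 = 0`
    (𝔞 𝔟 : Fin n → Submodule (NumberField.RingOfIntegers K) K)
    (h𝔞fg : ∀ i, (𝔞 i).FG) (h𝔞ne : ∀ i, 𝔞 i ≠ ⊥)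
    (h𝔟fg : ∀ i, (𝔟 i).FG) (h𝔟ne : ∀ i, 𝔟 i ≠ ⊥)
    (h𝔞val : ∀ i, Submodule.span (localizationAt (NumberField.RingOfIntegers K) K 𝔭 h𝔭.isPrime)
        ((𝔞 i : Set K)) =
      Submodule.span (localizationAt (NumberField.RingOfIntegers K) K 𝔭 h𝔭.isPrime) {(1 : K)})
    (h𝔟val : ∀ i, Submodule.span (localizationAt (NumberField.RingOfIntegers K) K 𝔭 h𝔭.isPrime)
        ((𝔟 i : Set K)) =
      Submodule.span (localizationAt (NumberField.RingOfIntegers K) K 𝔭 h𝔭.isPrime) {(1 : K)})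
    -- the `Λ`-lattices `X` and `Y` with the given pseudo-bases
    (X : Submodule (NumberField.RingOfIntegers K) V)
    (hXfg : X.FG) (hXst : SetStable (Λ : Set A) X)
    (hXdec : X = ⨆ i : Fin n, Submodule.map
      ((LinearMap.toSpanSingleton K V (bα i)).restrictScalars (NumberField.RingOfIntegers K))
      (𝔞 i))
    (Y : Submodule (NumberField.RingOfIntegers K) W)
    (hYfg : Y.FG) (hYst : SetStable (Λ : Set A) Y)
    (hYdec : Y = ⨆ i : Fin n, Submodule.map
      ((LinearMap.toSpanSingleton K W (bβ i)).restrictScalars (NumberField.RingOfIntegers K))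
      (𝔟 i))
    -- `B_1, …, B_r` : an `𝒪_𝔭`-basis of `Hom_{Λ_𝔭}(X_𝔭, Y_𝔭)` with entries in `𝒪_𝔭`
    (r : ℕ) (B : Fin r → (V →ₗ[K] W))
    (hBequiv : ∀ l : Fin r, ∀ (a : A) (v : V), (B l) (a • v) = a • (B l) v)
    (hBmat : ∀ l : Fin r, ∀ i j : Fin n, LinearMap.toMatrix bα bβ (B l) i j ∈
      localizationAt (NumberField.RingOfIntegers K) K 𝔭 h𝔭.isPrime)
    (hBmaps : ∀ l : Fin r,
      ∀ v ∈ Submodule.span (localizationAt (NumberField.RingOfIntegers K) K 𝔭 h𝔭.isPrime)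
        (X : Set V),
      (B l) v ∈ Submodule.span (localizationAt (NumberField.RingOfIntegers K) K 𝔭 h𝔭.isPrime)
        (Y : Set W))
    (hBindep : LinearIndependent (localizationAt (NumberField.RingOfIntegers K) K 𝔭 h𝔭.isPrime) B)
    (hBspan : ∀ f : V →ₗ[K] W,
      (∀ (a : A) (v : V), f (a • v) = a • f v) →
      (∀ v ∈ Submodule.span (localizationAt (NumberField.RingOfIntegers K) K 𝔭 h𝔭.isPrime)
          (X : Set V),
        f v ∈ Submodule.span (localizationAt (NumberField.RingOfIntegers K) K 𝔭 h𝔭.isPrime)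
          (Y : Set W)) →
      f ∈ Submodule.span (localizationAt (NumberField.RingOfIntegers K) K 𝔭 h𝔭.isPrime)
        (Set.range B))
    -- `B̄_1, …, B̄_r` : the reductions of the `B_i` modulo `𝔭`
    (Bbar : Fin r → Matrix (Fin n) (Fin n) (NumberField.RingOfIntegers K ⧸ 𝔭))
    (hred : ∀ (l : Fin r) (i j : Fin n),
      ReducesTo 𝔭 (LinearMap.toMatrix bα bβ (B l) i j) (Bbar l i j)) :
    -- `X_𝔭 ≅ Y_𝔭` iff some `𝒪/𝔭`-combination of the `B̄_i` has nonzero determinant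
    ((ExistsLatIso (Λ : Set A)
        (Submodule.span (localizationAt (NumberField.RingOfIntegers K) K 𝔭 h𝔭.isPrime)
          (X : Set V))
        (Submodule.span (localizationAt (NumberField.RingOfIntegers K) K 𝔭 h𝔭.isPrime)
          (Y : Set W))) ↔
      (∃ b : Fin r → (NumberField.RingOfIntegers K ⧸ 𝔭),
        Matrix.det (∑ l, b l • Bbar l) ≠ 0)) ∧
    -- moreover `c_1B_1 + ⋯ + c_rB_r` is then an isomorphism `X_𝔭 → Y_𝔭`
    (∀ b : Fin r → (NumberField.RingOfIntegers K ⧸ 𝔭),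
      Matrix.det (∑ l, b l • Bbar l) ≠ 0 →
      ∀ c : Fin r → K,
        (∀ l : Fin r, c l ∈ localizationAt (NumberField.RingOfIntegers K) K 𝔭 h𝔭.isPrime ∧
          ReducesTo 𝔭 (c l) (b l)) →
        Set.BijOn (⇑(∑ l, c l • B l))
          (Submodule.span (localizationAt (NumberField.RingOfIntegers K) K 𝔭 h𝔭.isPrime)
            (X : Set V) : Set V)
          (Submodule.span (localizationAt (NumberField.RingOfIntegers K) K 𝔭 h𝔭.isPrime)
            (Y : Set W) : Set W)) := by
  classical
  set 𝒪 := NumberField.RingOfIntegers K with h𝒪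
  set R := localizationAt 𝒪 K 𝔭 h𝔭.isPrime with hRdef
  set ρ := rho (K := K) 𝔭 h𝔭 with hρdef
  -- span identifications
  have hX_p : span R ((X : Set V)) = span R (Set.range bα) :=
    span_loc_eq R bα 𝔞 h𝔞val X hXdec
  have hY_p : span R ((Y : Set W)) = span R (Set.range bβ) :=
    span_loc_eq R bβ 𝔟 h𝔟val Y hYdec
  -- the quotient field is nontrivial
  letI : Field (𝒪 ⧸ 𝔭) := Ideal.Quotient.field 𝔭
  -- matrices of the B l over R
  set Ml : Fin r → Matrix (Fin n) (Fin n) K := fun l => LinearMap.toMatrix bα bβ (B l) with hMl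
  set Ml' : Fin r → Matrix (Fin n) (Fin n) R :=
    fun l => Matrix.of (fun i j => (⟨Ml l i j, hBmat l i j⟩ : R)) with hMl'
  set vK : R →+* K := (Subalgebra.val R).toRingHom with hvK
  have hvKinj : Function.Injective vK := Subtype.val_injective
  have hρMl : ∀ l, ρ.mapMatrix (Ml' l) = Bbar l := by
    intro l
    ext i j
    exact reducesTo_unique 𝔭 h𝔭 (reducesTo_rho 𝔭 h𝔭 _) (hred l i j)
  -- equivariance of R-combinations of the B l
  have hcomb_equiv : ∀ (c : Fin r → K) (a : A) (v : V),
      (∑ l, c l • B l) (a • v) = a • (∑ l, c l • B l) v := by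
    intro c a v
    rw [LinearMap.sum_apply, LinearMap.sum_apply, Finset.smul_sum]
    refine Finset.sum_congr rfl fun l _ => ?_
    rw [LinearMap.smul_apply, LinearMap.smul_apply, hBequiv l a v, algSMulComm]
  -- BijOn from an R-invertible coefficient matrix
  have key_bij : ∀ (c : Fin r → R), IsUnit (Matrix.det (∑ l, c l • Ml' l)) →
      Set.BijOn ⇑(∑ l, (c l : K) • B l)
        (span R (X : Set V) : Set V) (span R (Y : Set W) : Set W) := by
    intro c hu
    set M' : Matrix (Fin n) (Fin n) R := ∑ l, c l • Ml' l with hM'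
    have hNM : M'⁻¹ * M' = 1 := Matrix.nonsing_inv_mul M' hu
    have hMN : M' * M'⁻¹ = 1 := Matrix.mul_nonsing_inv M' hu
    set f : V →ₗ[K] W := ∑ l, (c l : K) • B l with hf
    have hfM : LinearMap.toMatrix bα bβ f = M'.map vK := by
      ext i j
      rw [hf, map_sum]
      simp only [hM', Matrix.map_apply, Matrix.sum_apply, Matrix.smul_apply,
        map_sum, LinearEquiv.map_smul]
      rfl
    set g : W →ₗ[K] V := (LinearMap.toMatrix bβ bα).symm (M'⁻¹.map vK) with hg
    have hgM : LinearMap.toMatrix bβ bα g = M'⁻¹.map vK := by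
      rw [hg, LinearEquiv.apply_symm_apply]
    rw [hX_p, hY_p]
    refine matrix_bijOn R bα bβ f g ?_ ?_ ?_ ?_
    · intro i j; rw [hfM]; exact (M' i j).2
    · intro i j; rw [hgM]; exact (M'⁻¹ i j).2
    · rw [hfM, hgM, ← Matrix.map_mul, hNM, Matrix.map_one vK (map_zero vK) (map_one vK)]
    · rw [hfM, hgM, ← Matrix.map_mul, hMN, Matrix.map_one vK (map_zero vK) (map_one vK)]
  -- constructing a lattice isomorphism from a suitable BijOn
  have mk_iso : ∀ f : V →ₗ[K] W, (∀ (a : A) (v : V), f (a • v) = a • f v) →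
      Set.BijOn ⇑f (span R (X : Set V) : Set V) (span R (Y : Set W) : Set W) →
      ExistsLatIso (Λ : Set A) (span R (X : Set V)) (span R (Y : Set W)) := by
    intro f hfe hbij
    refine ⟨(f.restrictScalars R).restrict (p := span R (X : Set V))
      (q := span R (Y : Set W)) (fun x hx => hbij.1 hx), ?_, ?_⟩
    · constructor
      · intro x y h
        exact Subtype.ext (hbij.2.1 x.2 y.2 (congrArg Subtype.val h))
      · intro y
        obtain ⟨x, hx, hfx⟩ := hbij.2.2 y.2
        exact ⟨⟨x, hx⟩, Subtype.ext hfx⟩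
    · intro a _ v hv hav
      exact hfe a v
  -- the "moreover" part
  have hmov : ∀ b : Fin r → (𝒪 ⧸ 𝔭),
      Matrix.det (∑ l, b l • Bbar l) ≠ 0 →
      ∀ c : Fin r → K, (∀ l : Fin r, c l ∈ R ∧ ReducesTo 𝔭 (c l) (b l)) →
        Set.BijOn (⇑(∑ l, c l • B l))
          (span R (X : Set V) : Set V) (span R (Y : Set W) : Set W) := by
    intro b hdet c hc
    set c' : Fin r → R := fun l => ⟨c l, (hc l).1⟩ with hc'
    have hρc : ∀ l, ρ (c' l) = b l :=
      fun l => reducesTo_unique 𝔭 h𝔭 (reducesTo_rho 𝔭 h𝔭 (c' l)) ((hc l).2)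
    have hρM : ρ.mapMatrix (∑ l, c' l • Ml' l) = ∑ l, b l • Bbar l := by
      rw [map_sum]
      refine Finset.sum_congr rfl fun l _ => ?_
      ext i j
      simp only [RingHom.mapMatrix_apply, Matrix.map_apply, Matrix.smul_apply, smul_eq_mul,
        map_mul, hρc l]
      rw [← hρMl l]
      rfl
    have hu : IsUnit (Matrix.det (∑ l, c' l • Ml' l)) := by
      apply isUnit_of_rho_ne_zero 𝔭 h𝔭
      rw [RingHom.map_det, hρM]
      exact hdet
    exact key_bij c' hu
  refine ⟨⟨?_, ?_⟩, hmov⟩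
  · -- forward direction
    rintro ⟨f, hfbij, hfeq⟩
    have hbmemα : ∀ i, bα i ∈ span R (X : Set V) := fun i => by
      rw [hX_p]; exact subset_span ⟨i, rfl⟩
    have hbmemβ : ∀ i, bβ i ∈ span R (Y : Set W) := fun i => by
      rw [hY_p]; exact subset_span ⟨i, rfl⟩
    have hstabX : ∀ a ∈ (Λ : Set A), ∀ v ∈ span R (X : Set V), a • v ∈ span R (X : Set V) := by
      intro a ha v hv
      refine span_induction ?_ ?_ ?_ ?_ hv
      · exact fun x hx => subset_span (hXst a ha x hx)
      · rw [smul_zero]; exact zero_mem _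
      · intro x y _ _ hx hy; rw [smul_add]; exact add_mem hx hy
      · intro t x _ hx
        have ht : t • x = (t : K) • x := rfl
        rw [ht, algSMulComm]
        exact smul_mem _ t hx
    set F : V →ₗ[K] W := bα.constr (S := ℕ) (fun i => (f ⟨bα i, hbmemα i⟩ : W)) with hF
    have hFbase : ∀ i, F (bα i) = f ⟨bα i, hbmemα i⟩ := fun i => bα.constr_basis _ _ _
    have hFx : ∀ (x : V) (hx : x ∈ span R (X : Set V)), F x = f ⟨x, hx⟩ := by
      intro x hx
      have hx' : x ∈ span R (Set.range bα) := hX_p ▸ hx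
      obtain ⟨d, hd⟩ := (mem_span_range_iff_exists_fun (↥R)).1 hx'
      have hsub : (⟨x, hx⟩ : span R (X : Set V)) = ∑ i, d i • ⟨bα i, hbmemα i⟩ := by
        apply Subtype.ext
        show x = _
        rw [← hd]
        push_cast
        rfl
      have h1 : F x = ∑ i, (d i : K) • (f ⟨bα i, hbmemα i⟩ : W) := by
        rw [← hd, map_sum]
        refine Finset.sum_congr rfl fun i _ => ?_
        have hdd : d i • bα i = (d i : K) • bα i := rfl
        rw [hdd, map_smul, hFbase]
      have h2 : (f ⟨x, hx⟩ : W) = ∑ i, (d i : K) • (f ⟨bα i, hbmemα i⟩ : W) := by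
        rw [hsub, map_sum]
        push_cast
        refine Finset.sum_congr rfl fun i _ => ?_
        rw [map_smul]
        rfl
      rw [h1, h2]
    have hFmaps : ∀ v ∈ span R (X : Set V), F v ∈ span R (Y : Set W) := by
      intro v hv
      rw [hFx v hv]
      exact (f ⟨v, hv⟩).2
    have hFeq : ∀ (a : A) (v : V), F (a • v) = a • F v := by
      have hstep : ∀ a ∈ (Λ : Set A), ∀ v : V, F (a • v) = a • F v := by
        intro a ha
        have hcomp : F.comp (aSMul a) = (aSMul a).comp F := by
          apply bα.ext
          intro i
          show F (a • bα i) = a • F (bα i)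
          rw [hFx _ (hstabX a ha _ (hbmemα i)), hFbase]
          exact hfeq a ha (bα i) (hbmemα i) (hstabX a ha _ (hbmemα i))
        intro v
        exact congrArg (fun L => L v) hcomp
      intro a v
      have hLL : F.comp (vSMul v) = vSMul (A := A) (F v) := by
        apply LinearMap.ext_on hΛ.2
        intro a ha
        show F (a • v) = a • F v
        exact hstep a ha v
      exact congrArg (fun L => L a) hLL
    obtain ⟨cc, hcc⟩ := (mem_span_range_iff_exists_fun (↥R)).1 (hBspan F hFeq hFmaps)
    -- the inverse map
    set e := LinearEquiv.ofBijective f hfbij with he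
    set g := e.symm with hgdef
    set G : W →ₗ[K] V := bβ.constr (S := ℕ) (fun i => ((g ⟨bβ i, hbmemβ i⟩ : _) : V)) with hG
    have hGbase : ∀ i, G (bβ i) = (g ⟨bβ i, hbmemβ i⟩ : V) := fun i => bβ.constr_basis _ _ _
    have hGx : ∀ (y : W) (hy : y ∈ span R (Y : Set W)), G y = (g ⟨y, hy⟩ : V) := by
      intro y hy
      have hy' : y ∈ span R (Set.range bβ) := hY_p ▸ hy
      obtain ⟨d, hd⟩ := (mem_span_range_iff_exists_fun (↥R)).1 hy'
      have hsub : (⟨y, hy⟩ : span R (Y : Set W)) = ∑ i, d i • ⟨bβ i, hbmemβ i⟩ := by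
        apply Subtype.ext
        show y = _
        rw [← hd]
        push_cast
        rfl
      have h1 : G y = ∑ i, (d i : K) • ((g ⟨bβ i, hbmemβ i⟩ : _) : V) := by
        rw [← hd, map_sum]
        refine Finset.sum_congr rfl fun i _ => ?_
        have hdd : d i • bβ i = (d i : K) • bβ i := rfl
        rw [hdd, map_smul, hGbase]
      have h2 : ((g ⟨y, hy⟩ : _) : V) = ∑ i, (d i : K) • ((g ⟨bβ i, hbmemβ i⟩ : _) : V) := by
        rw [hsub, map_sum]
        push_cast
        refine Finset.sum_congr rfl fun i _ => ?_
        rw [map_smul]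
        rfl
      rw [h1, h2]
    have hGF : G.comp F = LinearMap.id := by
      apply bα.ext
      intro i
      show G (F (bα i)) = bα i
      rw [hFbase i, hGx _ (f ⟨bα i, hbmemα i⟩).2]
      have : (⟨(f ⟨bα i, hbmemα i⟩ : W), (f ⟨bα i, hbmemα i⟩).2⟩ :
          span R (Y : Set W)) = e ⟨bα i, hbmemα i⟩ := rfl
      rw [this, hgdef, e.symm_apply_apply]
    set M : Matrix (Fin n) (Fin n) K := LinearMap.toMatrix bα bβ F with hM
    set N : Matrix (Fin n) (Fin n) K := LinearMap.toMatrix bβ bα G with hN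
    have hNM : N * M = 1 := by
      rw [hM, hN, ← LinearMap.toMatrix_comp bα bβ bα, hGF, LinearMap.toMatrix_id]
    have hMR : ∀ i j, M i j ∈ R := by
      intro i j
      have hFb : F (bα j) ∈ span R (Set.range bβ) := hY_p ▸ hFmaps _ (hbmemα j)
      rw [hM, LinearMap.toMatrix_apply]
      exact (mem_span_range_basis R bβ _).1 hFb i
    have hNR : ∀ i j, N i j ∈ R := by
      intro i j
      have hmem : G (bβ j) ∈ span R (X : Set V) := by
        rw [hGx _ (hbmemβ j)]
        exact (g ⟨bβ j, hbmemβ j⟩).2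
      have hmem' : G (bβ j) ∈ span R (Set.range bα) := by rw [← hX_p]; exact hmem
      rw [hN, LinearMap.toMatrix_apply]
      exact (mem_span_range_basis R bα _).1 hmem' i
    have hMsum : ∀ i j, (((∑ l, cc l • Ml' l) i j : R) : K) = M i j := by
      intro i j
      rw [hM, ← hcc, map_sum]
      simp only [Matrix.sum_apply, Matrix.smul_apply, AddSubmonoidClass.coe_finset_sum]
      refine Finset.sum_congr rfl fun l _ => ?_
      have hsm : cc l • B l = (cc l : K) • B l := rfl
      rw [hsm, LinearEquiv.map_smul]
      rfl
    set N' : Matrix (Fin n) (Fin n) R := Matrix.of (fun i j => (⟨N i j, hNR i j⟩ : R)) with hN'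
    have hN'M' : N' * (∑ l, cc l • Ml' l) = 1 := by
      refine Matrix.ext fun i j => Subtype.ext ?_
      have : ((N' * (∑ l, cc l • Ml' l)) i j : K) = (N * M) i j := by
        rw [Matrix.mul_apply, Matrix.mul_apply]
        push_cast
        exact Finset.sum_congr rfl fun k _ => by rw [hMsum k j]; rfl
      rw [this, hNM]
      by_cases h : i = j
      · subst h; simp [Matrix.one_apply]
      · simp [Matrix.one_apply, h]
    have hdetne : ρ ((∑ l, cc l • Ml' l).det) ≠ 0 := by
      intro h0
      have h1 := congrArg Matrix.det hN'M'
      rw [Matrix.det_mul, Matrix.det_one] at h1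
      have h2 := congrArg ρ h1
      rw [map_mul, map_one, h0, mul_zero] at h2
      exact zero_ne_one h2
    refine ⟨fun l => ρ (cc l), ?_⟩
    have hsum : ∑ l, ρ (cc l) • Bbar l = ρ.mapMatrix (∑ l, cc l • Ml' l) := by
      rw [map_sum]
      refine Finset.sum_congr rfl fun l _ => ?_
      ext i j
      simp only [RingHom.mapMatrix_apply, Matrix.map_apply, Matrix.smul_apply, smul_eq_mul,
        map_mul]
      rw [← hρMl l]
      rfl
    rw [hsum, ← RingHom.map_det]
    exact hdetne
  · -- backward direction of the iff
    rintro ⟨b, hdet⟩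
    choose u hu using fun l => Ideal.Quotient.mk_surjective (b l)
    set c : Fin r → K := fun l => algebraMap 𝒪 K (u l) with hcdef
    have hcl : ∀ l, c l ∈ R ∧ ReducesTo 𝔭 (c l) (b l) := by
      intro l
      refine ⟨R.algebraMap_mem (u l), u l, 1, (Ideal.ne_top_iff_one 𝔭).1 h𝔭.ne_top, ?_, ?_⟩
      · rw [map_one, mul_one]
      · rw [hu l, map_one, mul_one]
    exact mk_iso (∑ l, c l • B l) (hcomb_equiv c) (hmov b hdet c hcl)
end
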